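/- arXiv:1607.00565 — 2 statements merged into one kernel-verified Lean document; each statement's English description precedes it below -/
import Mathlib

section
/- Let p be a real number. Define f : S → ℝ by f(x) = p^{ℓ(x)}, let h : S → ℝ be its Möbius transform, h(x) = Σ_{X ⊆ Σ with x·Δ̂(X) ∈ S} (−1)^{|X|} p^{ℓ(x·Δ̂(X))}, and define g : S → ℝ by g(x) = Σ_{y ∈ S with x → y} h(y). Then h(x) = p^{ℓ(x)}·g(x) for every x ∈ S. -/
open scoped Classical

namespace BraidMeasure

/-- Defining relations of the positive braid monoid on `n` strands,
with Artin generators indexed by `Fin (n - 1)`. -/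
inductive BraidRel (n : ℕ) :
    FreeMonoid (Fin (n - 1)) → FreeMonoid (Fin (n - 1)) → Prop
  | comm (i j : Fin (n - 1)) (h : (i : ℕ) + 2 ≤ (j : ℕ)) :
      BraidRel n (FreeMonoid.of i * FreeMonoid.of j)
        (FreeMonoid.of j * FreeMonoid.of i)
  | braid (i j : Fin (n - 1)) (h : (i : ℕ) + 1 = (j : ℕ)) :
      BraidRel n (FreeMonoid.of i * FreeMonoid.of j * FreeMonoid.of i)
        (FreeMonoid.of j * FreeMonoid.of i * FreeMonoid.of j)

/-- The positive braid monoid `Br_n`, presented by the Artin relations. -/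
def BraidMonoid (n : ℕ) : Type := (conGen (BraidRel n)).Quotient

instance (n : ℕ) : Monoid (BraidMonoid n) :=
  inferInstanceAs (Monoid (conGen (BraidRel n)).Quotient)

/-- The Artin generator `σ_{i+1}` of `Br_n`. -/
def gen {n : ℕ} (i : Fin (n - 1)) : BraidMonoid n :=
  (conGen (BraidRel n)).mk' (FreeMonoid.of i)

/-- Left divisibility: `x ≤_l y` iff `∃ z, y = x * z`. -/
def ldvd {n : ℕ} (x y : BraidMonoid n) : Prop := ∃ z, y = x * z

/-- Right divisibility: `x ≤_r y` iff `∃ z, y = z * x`. -/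
def rdvd {n : ℕ} (x y : BraidMonoid n) : Prop := ∃ z, y = z * x

/-- `σ_{i+1}` for a natural number index, with junk value `1` out of range. -/
def gen' {n : ℕ} (i : ℕ) : BraidMonoid n :=
  if h : i < n - 1 then gen ⟨i, h⟩ else 1

/-- The Garside element `Δ_n = (σ_1 ⋯ σ_{n-1})(σ_1 ⋯ σ_{n-2}) ⋯ (σ_1 σ_2) σ_1`. -/
def garside (n : ℕ) : BraidMonoid n :=
  ((List.range (n - 1)).map fun j =>
    ((List.range (n - 1 - j)).map fun i => (gen' i : BraidMonoid n)).prod).prod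

/-- The set of simple braids: left divisors of `Δ_n`. -/
def Simples (n : ℕ) : Set (BraidMonoid n) := {x | ldvd x (garside n)}

/-- `L(y) = {σ_i : σ_i ≤_l y}` (as a set of indices). -/
def Lset {n : ℕ} (y : BraidMonoid n) : Set (Fin (n - 1)) := {i | ldvd (gen i) y}

/-- `R(x) = {σ_i : x · σ_i ∉ S}` (as a set of indices). -/
def Rset {n : ℕ} (x : BraidMonoid n) : Set (Fin (n - 1)) :=
  {i | x * gen i ∉ Simples n}

/-- The relation `x → y` between simple braids: `L(y) ⊆ R(x)`. -/
def Arrow {n : ℕ} (x y : BraidMonoid n) : Prop := Lset y ⊆ Rset x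

/-- The Möbius polynomial of the positive braid monoid:
`H_0 = H_1 = 1`, `H_n = ∑_{k=1}^{n} (-1)^{k+1} t^{k(k-1)/2} H_{n-k}`. -/
noncomputable def mobiusH : ℕ → Polynomial ℤ
  | 0 => 1
  | 1 => 1
  | (n + 2) =>
      ∑ j ∈ Finset.range (n + 2),
        (-1 : Polynomial ℤ) ^ j * Polynomial.X ^ ((j + 1) * j / 2) * mobiusH (n + 1 - j)
  termination_by n => n
  decreasing_by omega


-- ===================== words =====================
variable {n : ℕ}

/-- far: commuting generators -/
def Far {n : ℕ} (i j : Fin (n-1)) : Prop := (i:ℕ) + 2 ≤ j ∨ (j:ℕ) + 2 ≤ i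
/-- adjacent generators -/
def Adj {n : ℕ} (i j : Fin (n-1)) : Prop := (i:ℕ) + 1 = j ∨ (j:ℕ) + 1 = i

lemma Far.symm {i j : Fin (n-1)} (h : Far i j) : Far j i := h.elim .inr .inl
lemma Adj.symm {i j : Fin (n-1)} (h : Adj i j) : Adj j i := h.elim .inr .inl
lemma far_ne {i j : Fin (n-1)} (h : Far i j) : i ≠ j := by
  rintro rfl; rcases h with h | h <;> omega
lemma adj_ne {i j : Fin (n-1)} (h : Adj i j) : i ≠ j := by
  rintro rfl; rcases h with h | h <;> omega
lemma adj_not_far {i j : Fin (n-1)} (h : Adj i j) : ¬ Far i j := by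
  rintro (h' | h') <;> rcases h with h | h <;> omega
lemma trichotomy (i j : Fin (n-1)) : i = j ∨ Adj i j ∨ Far i j := by
  rcases Nat.lt_trichotomy (i:ℕ) (j:ℕ) with h | h | h
  · rcases Nat.lt_or_ge ((i:ℕ)+1) j with h' | h'
    · exact .inr (.inr (.inl h'))
    · exact .inr (.inl (.inl (by omega)))
  · exact .inl (Fin.ext h)
  · rcases Nat.lt_or_ge ((j:ℕ)+1) i with h' | h'
    · exact .inr (.inr (.inr h'))
    · exact .inr (.inl (.inr (by omega)))
/-- not adjacent to two adjacent ones -/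
lemma adj_adj_adj_false {i j k : Fin (n-1)} (h1 : Adj i k) (h2 : Adj i j) (h3 : Adj k j) : False := by
  rcases h1 with h1 | h1 <;> rcases h2 with h2 | h2 <;> rcases h3 with h3 | h3 <;> omega

/-- one-step rewriting on words -/
inductive Rw (n : ℕ) : List (Fin (n-1)) → List (Fin (n-1)) → Prop
  | comm {i j : Fin (n-1)} (h : Far i j) (t : List (Fin (n-1))) :
      Rw n (i :: j :: t) (j :: i :: t)
  | braid {i j : Fin (n-1)} (h : Adj i j) (t : List (Fin (n-1))) :
      Rw n (i :: j :: i :: t) (j :: i :: j :: t)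
  | cons (x : Fin (n-1)) {u v : List (Fin (n-1))} :
      Rw n u v → Rw n (x :: u) (x :: v)

def Equiv' (n : ℕ) : List (Fin (n-1)) → List (Fin (n-1)) → Prop :=
  Relation.ReflTransGen (Rw n)

lemma Rw.symm' {u v : List (Fin (n-1))} (h : Rw n u v) : Rw n v u := by
  induction h with
  | comm h t => exact .comm h.symm t
  | braid h t => exact .braid h.symm t
  | cons x _ ih => exact .cons x ih

lemma Rw.length {u v : List (Fin (n-1))} (h : Rw n u v) : u.length = v.length := by
  induction h with
  | comm h t => rfl
  | braid h t => rfl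
  | cons x _ ih => simpa using ih

namespace Equiv'

lemma rfl' {u : List (Fin (n-1))} : Equiv' n u u := Relation.ReflTransGen.refl

lemma of (h : Rw n u v) : Equiv' n u v := Relation.ReflTransGen.single h

lemma symm {u v : List (Fin (n-1))} (h : Equiv' n u v) : Equiv' n v u := by
  induction h with
  | refl => exact .refl
  | tail _ h ih => exact Relation.ReflTransGen.head h.symm' ih

lemma trans {u v w : List (Fin (n-1))} (h : Equiv' n u v) (h' : Equiv' n v w) :
    Equiv' n u w := Relation.ReflTransGen.trans h h'

lemma length {u v : List (Fin (n-1))} (h : Equiv' n u v) : u.length = v.length := by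
  induction h with
  | refl => rfl
  | tail _ h ih => exact ih.trans h.length

lemma cons (x : Fin (n-1)) {u v : List (Fin (n-1))} (h : Equiv' n u v) :
    Equiv' n (x :: u) (x :: v) := by
  induction h with
  | refl => exact .refl
  | tail _ h ih => exact ih.tail (.cons x h)

lemma append_left (w : List (Fin (n-1))) {u v : List (Fin (n-1))} (h : Equiv' n u v) :
    Equiv' n (w ++ u) (w ++ v) := by
  induction w with
  | nil => exact h
  | cons x w ih => exact ih.cons x

lemma append_right {u v : List (Fin (n-1))} (h : Equiv' n u v) (w : List (Fin (n-1))) :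
    Equiv' n (u ++ w) (v ++ w) := by
  have step : ∀ {u v : List (Fin (n-1))}, Rw n u v → Rw n (u ++ w) (v ++ w) := by
    intro u v h
    induction h with
    | comm h t => exact .comm h (t ++ w)
    | braid h t => exact .braid h (t ++ w)
    | cons x _ ih => exact .cons x ih
  induction h with
  | refl => exact .refl
  | tail _ h ih => exact ih.tail (step h)

lemma append {u v u' v' : List (Fin (n-1))} (h : Equiv' n u v) (h' : Equiv' n u' v') :
    Equiv' n (u ++ u') (v ++ v') := (h.append_right u').trans (append_left v h')

end Equiv'

-- ===================== bridge =====================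

/-- words to braid monoid -/
def mkw (n : ℕ) (l : List (Fin (n-1))) : BraidMonoid n :=
  (conGen (BraidRel n)).mk' (FreeMonoid.ofList l)

lemma mkw_nil : mkw n [] = 1 := rfl

lemma mkw_cons (i : Fin (n-1)) (l : List (Fin (n-1))) :
    mkw n (i :: l) = gen i * mkw n l := by
  exact map_mul ((conGen (BraidRel n)).mk') (FreeMonoid.of i) (FreeMonoid.ofList l)

lemma mkw_append (l l' : List (Fin (n-1))) :
    mkw n (l ++ l') = mkw n l * mkw n l' := by
  exact map_mul ((conGen (BraidRel n)).mk') (FreeMonoid.ofList l) (FreeMonoid.ofList l')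

lemma mkw_surjective (x : BraidMonoid n) : ∃ l, mkw n l = x := by
  obtain ⟨w, rfl⟩ := Con.mk'_surjective (c := conGen (BraidRel n)) x
  exact ⟨w.toList, by simp [mkw]; rfl⟩

/-- the congruence whose relation is `Equiv'` -/
def equivCon (n : ℕ) : Con (FreeMonoid (Fin (n-1))) where
  r a b := Equiv' n a.toList b.toList
  iseqv := ⟨fun _ => .rfl', .symm, .trans⟩
  mul' {a b c d} h h' := Equiv'.append h h'

lemma braidRel_toList {a b : FreeMonoid (Fin (n-1))} (h : BraidRel n a b) :
    Rw n a.toList b.toList := by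
  cases h with
  | comm i j h => exact .comm (.inl h) []
  | braid i j h => exact .braid (.inl h) []

lemma conGen_iff_equiv {a b : FreeMonoid (Fin (n-1))} :
    conGen (BraidRel n) a b ↔ Equiv' n a.toList b.toList := by
  constructor
  · intro h
    exact (Con.conGen_le (c := equivCon n)).mpr
      (fun x y hxy => Equiv'.of (braidRel_toList hxy)) h
  · intro h
    have one : ∀ {u v : List (Fin (n-1))}, Rw n u v →
        conGen (BraidRel n) (FreeMonoid.ofList u) (FreeMonoid.ofList v) := by
      intro u v h
      induction h with
      | @comm i j h t =>
          have base : conGen (BraidRel n)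
              (FreeMonoid.of i * FreeMonoid.of j) (FreeMonoid.of j * FreeMonoid.of i) := by
            rcases h with h | h
            · exact ConGen.Rel.of _ _ (BraidRel.comm i j h)
            · exact (ConGen.Rel.of _ _ (BraidRel.comm j i h)).symm
          have := base.mul (ConGen.Rel.refl (FreeMonoid.ofList t))
          exact this
      | @braid i j h t =>
          have base : conGen (BraidRel n)
              (FreeMonoid.of i * FreeMonoid.of j * FreeMonoid.of i)
              (FreeMonoid.of j * FreeMonoid.of i * FreeMonoid.of j) := by
            rcases h with h | h
            · exact ConGen.Rel.of _ _ (BraidRel.braid i j h)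
            · exact (ConGen.Rel.of _ _ (BraidRel.braid j i h)).symm
          have := base.mul (ConGen.Rel.refl (FreeMonoid.ofList t))
          exact this
      | @cons x u v _ ih =>
          have := (ConGen.Rel.refl (FreeMonoid.of x)).mul ih
          exact this
    have aux : ∀ u v : List (Fin (n-1)), Equiv' n u v →
        conGen (BraidRel n) (FreeMonoid.ofList u) (FreeMonoid.ofList v) := by
      intro u v h
      induction h with
      | refl => exact ConGen.Rel.refl _
      | tail _ h ih => exact ih.trans (one h)
    have := aux a.toList b.toList h
    simpa using this

lemma mkw_eq_iff {u v : List (Fin (n-1))} : mkw n u = mkw n v ↔ Equiv' n u v := by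
  unfold mkw
  rw [show ((conGen (BraidRel n)).mk' (FreeMonoid.ofList u) : BraidMonoid n)
      = ((FreeMonoid.ofList u : FreeMonoid (Fin (n-1))) : (conGen (BraidRel n)).Quotient) from rfl,
    show ((conGen (BraidRel n)).mk' (FreeMonoid.ofList v) : BraidMonoid n)
      = ((FreeMonoid.ofList v : FreeMonoid (Fin (n-1))) : (conGen (BraidRel n)).Quotient) from rfl,
    ]
  exact (Con.eq _).trans conGen_iff_equiv

variable {n : ℕ}

/-- chains of rewriting steps of given length -/
def chainRw (n : ℕ) : ℕ → List (Fin (n-1)) → List (Fin (n-1)) → Prop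
  | 0, u, v => u = v
  | (N+1), u, v => ∃ w, Rw n u w ∧ chainRw n N w v

lemma chainRw_snoc {N : ℕ} {u v w : List (Fin (n-1))}
    (h : chainRw n N u v) (h' : Rw n v w) : chainRw n (N+1) u w := by
  induction N generalizing u with
  | zero => exact ⟨w, h ▸ h', rfl⟩
  | succ N ih =>
      obtain ⟨z, hz, hc⟩ := h
      exact ⟨z, hz, ih hc⟩

lemma equiv_iff_chain {u v : List (Fin (n-1))} :
    Equiv' n u v ↔ ∃ N, chainRw n N u v := by
  constructor
  · intro h
    induction h with
    | refl => exact ⟨0, rfl⟩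
    | tail _ h ih => obtain ⟨N, hN⟩ := ih; exact ⟨N+1, chainRw_snoc hN h⟩
  · rintro ⟨N, h⟩
    induction N generalizing u with
    | zero => exact h ▸ .refl
    | succ N ih =>
        obtain ⟨w, hw, hc⟩ := h
        exact Relation.ReflTransGen.head hw (ih hc)

/-- the complement word: `σ_i · comp i j` is the lcm of `σ_i, σ_j`. -/
noncomputable def comp {n : ℕ} (i j : Fin (n-1)) : List (Fin (n-1)) :=
  if i = j then [] else if Adj i j then [j, i] else [j]

lemma comp_self (i : Fin (n-1)) : comp i i = [] := by simp [comp]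

lemma comp_adj {i j : Fin (n-1)} (h : Adj i j) : comp i j = [j, i] := by
  simp [comp, adj_ne h, h]

lemma comp_far {i j : Fin (n-1)} (h : Far i j) : comp i j = [j] := by
  have h1 : i ≠ j := far_ne h
  have h2 : ¬ Adj i j := fun h' => adj_not_far h' h
  simp [comp, h1, h2]

/-- **Garside's key lemma.** -/
theorem key (ℓ : ℕ) : ∀ N (i : Fin (n-1)) a j b, a.length + 1 ≤ ℓ →
    chainRw n N (i::a) (j::b) →
    ∃ c, Equiv' n a (comp i j ++ c) ∧ Equiv' n b (comp j i ++ c) := by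
  induction ℓ using Nat.strong_induction_on with
  | _ ℓ IHl =>
  have keyS : ∀ (i : Fin (n-1)) a j b, a.length + 1 < ℓ → Equiv' n (i::a) (j::b) →
      ∃ c, Equiv' n a (comp i j ++ c) ∧ Equiv' n b (comp j i ++ c) := by
    intro i a j b hl he
    obtain ⟨N, hc⟩ := equiv_iff_chain.mp he
    exact IHl (a.length + 1) hl N i a j b le_rfl hc
  intro N
  induction N using Nat.strong_induction_on with
  | _ N IHN =>
  intro i a j b hlen hch
  match N, hch with
  | 0, hch =>
      obtain ⟨rfl, rfl⟩ : i = j ∧ a = b := by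
        have h := hch
        simp only [chainRw] at h
        exact ⟨List.head_eq_of_cons_eq h, List.tail_eq_of_cons_eq h⟩
      exact ⟨a, by rw [comp_self]; exact .rfl', by rw [comp_self]; exact .rfl'⟩
  | (N+1), hch => ?_
  obtain ⟨v, hst, hch'⟩ := hch
  have IH : ∀ (i : Fin (n-1)) a j b, a.length + 1 ≤ ℓ →
      chainRw n N (i::a) (j::b) →
      ∃ c, Equiv' n a (comp i j ++ c) ∧ Equiv' n b (comp j i ++ c) :=
    IHN N (Nat.lt_succ_self N)
  cases hst with
  | @cons x u v' hw =>
      -- the step happens inside a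
      have hlen2 : v'.length + 1 ≤ ℓ := by
        have := hw.length; omega
      obtain ⟨c, hc1, hc2⟩ := IH i v' j b hlen2 hch'
      exact ⟨c, (Equiv'.of hw).trans hc1, hc2⟩
  | @comm i' k hfar a₂ =>
      -- a = k :: a₂, v = k :: i :: a₂, hfar : Far i k
      have hlen2 : (i::a₂).length + 1 ≤ ℓ := by simp at hlen ⊢; omega
      obtain ⟨d, hd1, hd2⟩ := IH k (i::a₂) j b hlen2 hch'
      rcases trichotomy j k with hjk | hjk | hjk
      · -- j = k
        subst hjk
        rw [comp_self] at hd1 hd2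
        simp only [List.nil_append] at hd1 hd2
        refine ⟨a₂, ?_, ?_⟩
        · rw [comp_far hfar]; exact .rfl'
        · rw [comp_far hfar.symm]; exact hd2.trans hd1.symm
      · -- Adj j k
        rw [comp_adj hjk.symm] at hd1
        rcases trichotomy i j with hij | hij | hij
        · -- i = j impossible : Far i k & Adj j k
          subst hij
          exact absurd hfar (adj_not_far hjk)
        · -- S5 : Adj i j, Adj j k, Far i k
          have hL1 : a₂.length + 1 < ℓ := by simp at hlen; omega
          obtain ⟨f, hf1, hf2⟩ := keyS i a₂ j (k::d) hL1 hd1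
          rw [comp_adj hij] at hf1
          rw [comp_adj hij.symm] at hf2
          have hL2 : d.length + 1 < ℓ := by
            have := hd1.length; simp at this hlen; omega
          obtain ⟨u, hu1, hu2⟩ := keyS k d i (j::f) hL2 hf2
          rw [comp_far hfar.symm] at hu1
          rw [comp_far hfar] at hu2
          have hL3 : f.length + 1 < ℓ := by
            have := hf1.length; simp at this hlen; omega
          obtain ⟨w, hw1, hw2⟩ := keyS j f k u hL3 hu2
          rw [comp_adj hjk] at hw1
          rw [comp_adj hjk.symm] at hw2
          refine ⟨k::j::i::w, ?_, ?_⟩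
          · rw [comp_adj hij]
            have e1 : Equiv' n (k::a₂) (k::j::i::k::j::w) :=
              (hf1.trans ((hw1.cons i).cons j)).cons k
            have s1 : Rw n (k::j::i::k::j::w) (k::j::k::i::j::w) :=
              .cons k (.cons j (.comm hfar (j::w)))
            have s2 : Rw n (k::j::k::i::j::w) (j::k::j::i::j::w) :=
              .braid hjk.symm (i::j::w)
            have s3 : Rw n (j::k::j::i::j::w) (j::k::i::j::i::w) :=
              .cons j (.cons k (.braid hij.symm w))
            have s4 : Rw n (j::k::i::j::i::w) (j::i::k::j::i::w) :=
              .cons j (.comm hfar.symm (j::i::w))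
            exact e1.trans ((((Equiv'.of s1).trans (.of s2)).trans (.of s3)).trans (.of s4))
          · rw [comp_adj hij.symm]
            rw [comp_adj hjk] at hd2
            have e2 : Equiv' n b (k::j::i::j::k::w) :=
              hd2.trans (((hu1.trans ((hw2.cons i))).cons j).cons k)
            have s1 : Rw n (k::j::i::j::k::w) (k::i::j::i::k::w) :=
              .cons k (.braid hij.symm (k::w))
            have s2 : Rw n (k::i::j::i::k::w) (i::k::j::i::k::w) :=
              .comm hfar.symm (j::i::k::w)
            have s3 : Rw n (i::k::j::i::k::w) (i::k::j::k::i::w) :=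
              .cons i (.cons k (.cons j (.comm hfar w)))
            have s4 : Rw n (i::k::j::k::i::w) (i::j::k::j::i::w) :=
              .cons i (.braid hjk.symm (i::w))
            exact e2.trans ((((Equiv'.of s1).trans (.of s2)).trans (.of s3)).trans (.of s4))
        · -- S3 : Far i j, Adj j k, Far i k
          have hL1 : a₂.length + 1 < ℓ := by simp at hlen; omega
          obtain ⟨f, hf1, hf2⟩ := keyS i a₂ j (k::d) hL1 hd1
          rw [comp_far hij] at hf1
          rw [comp_far hij.symm] at hf2
          have hL2 : d.length + 1 < ℓ := by
            have := hd1.length; simp at this hlen; omega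
          obtain ⟨u, hu1, hu2⟩ := keyS k d i f hL2 hf2
          rw [comp_far hfar.symm] at hu1
          rw [comp_far hfar] at hu2
          refine ⟨k::j::u, ?_, ?_⟩
          · rw [comp_far hij]
            have e1 : Equiv' n (k::a₂) (k::j::k::u) := (hf1.trans (hu2.cons j)).cons k
            exact e1.trans (.of (.braid hjk.symm u))
          · rw [comp_far hij.symm]
            rw [comp_adj hjk] at hd2
            have e2 : Equiv' n b (k::j::i::u) := hd2.trans ((hu1.cons j).cons k)
            have s1 : Rw n (k::j::i::u) (k::i::j::u) := .cons k (.comm hij.symm u)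
            have s2 : Rw n (k::i::j::u) (i::k::j::u) := .comm hfar.symm (j::u)
            exact e2.trans ((Equiv'.of s1).trans (.of s2))
      · -- Far j k
        rw [comp_far hjk.symm] at hd1
        rcases trichotomy i j with hij | hij | hij
        · -- i = j (S1)
          subst hij
          have hL1 : a₂.length + 1 < ℓ := by simp at hlen; omega
          obtain ⟨f, hf1, hf2⟩ := keyS i a₂ i d hL1 hd1
          rw [comp_self] at hf1 hf2
          simp only [List.nil_append] at hf1 hf2
          refine ⟨k::a₂, ?_, ?_⟩
          · rw [comp_self]; exact .rfl'
          · rw [comp_self]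
            rw [comp_far hjk] at hd2
            simp only [List.nil_append]
            exact hd2.trans ((hf2.trans hf1.symm).cons k)
        · -- S4 : Adj i j, Far j k, Far i k
          have hL1 : a₂.length + 1 < ℓ := by simp at hlen; omega
          obtain ⟨f, hf1, hf2⟩ := keyS i a₂ j d hL1 hd1
          rw [comp_adj hij] at hf1
          rw [comp_adj hij.symm] at hf2
          refine ⟨k::f, ?_, ?_⟩
          · rw [comp_adj hij]
            have e1 : Equiv' n (k::a₂) (k::j::i::f) := hf1.cons k
            have s1 : Rw n (k::j::i::f) (j::k::i::f) := .comm hjk.symm (i::f)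
            have s2 : Rw n (j::k::i::f) (j::i::k::f) := .cons j (.comm hfar.symm f)
            exact e1.trans ((Equiv'.of s1).trans (.of s2))
          · rw [comp_adj hij.symm]
            rw [comp_far hjk] at hd2
            have e2 : Equiv' n b (k::i::j::f) := hd2.trans (hf2.cons k)
            have s1 : Rw n (k::i::j::f) (i::k::j::f) := .comm hfar.symm (j::f)
            have s2 : Rw n (i::k::j::f) (i::j::k::f) := .cons i (.comm hjk.symm f)
            exact e2.trans ((Equiv'.of s1).trans (.of s2))
        · -- S2 : Far i j, Far j k, Far i k
          have hL1 : a₂.length + 1 < ℓ := by simp at hlen; omega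
          obtain ⟨f, hf1, hf2⟩ := keyS i a₂ j d hL1 hd1
          rw [comp_far hij] at hf1
          rw [comp_far hij.symm] at hf2
          refine ⟨k::f, ?_, ?_⟩
          · rw [comp_far hij]
            have e1 : Equiv' n (k::a₂) (k::j::f) := hf1.cons k
            exact e1.trans (.of (.comm hjk.symm f))
          · rw [comp_far hij.symm]
            rw [comp_far hjk] at hd2
            have e2 : Equiv' n b (k::i::f) := hd2.trans (hf2.cons k)
            exact e2.trans (.of (.comm hfar.symm f))
  | @braid i' k hadj a₃ =>
      -- a = k::i::a₃, v = k::i::k::a₃, hadj : Adj i k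
      have hlen2 : (i::k::a₃).length + 1 ≤ ℓ := by simp at hlen ⊢; omega
      obtain ⟨d, hd1, hd2⟩ := IH k (i::k::a₃) j b hlen2 hch'
      rcases trichotomy j k with hjk | hjk | hjk
      · -- j = k
        subst hjk
        rw [comp_self] at hd1 hd2
        simp only [List.nil_append] at hd1 hd2
        refine ⟨a₃, ?_, ?_⟩
        · rw [comp_adj hadj]; exact .rfl'
        · rw [comp_adj hadj.symm]; exact hd2.trans hd1.symm
      · -- Adj j k
        rw [comp_adj hjk.symm] at hd1
        rcases trichotomy i j with hij | hij | hij
        · -- T1 : i = j, Adj j k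
          subst hij
          have hL1 : (k::a₃).length + 1 < ℓ := by simp at hlen ⊢; omega
          obtain ⟨f, hf1, hf2⟩ := keyS i (k::a₃) i (k::d) hL1 hd1
          rw [comp_self] at hf1 hf2
          simp only [List.nil_append] at hf1 hf2
          have hkk : Equiv' n (k::a₃) (k::d) := hf1.trans hf2.symm
          have hL2 : a₃.length + 1 < ℓ := by simp at hlen; omega
          obtain ⟨u, hu1, hu2⟩ := keyS k a₃ k d hL2 hkk
          rw [comp_self] at hu1 hu2
          simp only [List.nil_append] at hu1 hu2
          refine ⟨k::i::a₃, ?_, ?_⟩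
          · rw [comp_self]; exact .rfl'
          · rw [comp_self]
            rw [comp_adj hjk] at hd2
            simp only [List.nil_append]
            exact hd2.trans (((hu2.trans hu1.symm).cons i).cons k)
        · -- Adj i j, Adj j k, Adj i k : impossible
          exact absurd (adj_adj_adj_false hadj hij hjk.symm) (fun h => h)
        · -- T2b : Far i j, Adj j k, Adj i k
          have hL1 : (k::a₃).length + 1 < ℓ := by simp at hlen ⊢; omega
          obtain ⟨f, hf1, hf2⟩ := keyS i (k::a₃) j (k::d) hL1 hd1
          rw [comp_far hij] at hf1
          rw [comp_far hij.symm] at hf2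
          have hL2 : a₃.length + 1 < ℓ := by simp at hlen; omega
          obtain ⟨u, hu1, hu2⟩ := keyS k a₃ j f hL2 hf1
          rw [comp_adj hjk.symm] at hu1
          rw [comp_adj hjk] at hu2
          have hL3 : d.length + 1 < ℓ := by
            have := hd1.length; simp at this hlen; omega
          obtain ⟨v', hv1, hv2⟩ := keyS k d i f hL3 hf2
          rw [comp_adj hadj.symm] at hv1
          rw [comp_adj hadj] at hv2
          have hfe : Equiv' n (k::(j::u)) (k::(i::v')) := hu2.symm.trans hv2
          have hL4 : (j::u).length + 1 < ℓ := by
            have := hu1.length; simp at this hlen ⊢; omega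
          obtain ⟨w0, hw01, hw02⟩ := keyS k (j::u) k (i::v') hL4 hfe
          rw [comp_self] at hw01 hw02
          simp only [List.nil_append] at hw01 hw02
          have hju : Equiv' n (j::u) (i::v') := hw01.trans hw02.symm
          have hL5 : u.length + 1 < ℓ := by
            have := hu1.length; simp at this hlen; omega
          obtain ⟨w, hw1, hw2⟩ := keyS j u i v' hL5 hju
          rw [comp_far hij.symm] at hw1
          rw [comp_far hij] at hw2
          refine ⟨k::j::i::k::w, ?_, ?_⟩
          · rw [comp_far hij]
            have e1 : Equiv' n (k::i::a₃) (k::i::j::k::i::w) :=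
              ((hu1.trans ((hw1.cons k).cons j)).cons i).cons k
            have s1 : Rw n (k::i::j::k::i::w) (k::j::i::k::i::w) :=
              .cons k (.comm hij (k::i::w))
            have s2 : Rw n (k::j::i::k::i::w) (k::j::k::i::k::w) :=
              .cons k (.cons j (.braid hadj w))
            have s3 : Rw n (k::j::k::i::k::w) (j::k::j::i::k::w) :=
              .braid hjk.symm (i::k::w)
            exact e1.trans (((Equiv'.of s1).trans (.of s2)).trans (.of s3))
          · rw [comp_far hij.symm]
            rw [comp_adj hjk] at hd2
            have e2 : Equiv' n b (k::j::i::k::j::w) :=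
              hd2.trans (((hv1.trans ((hw2.cons k).cons i)).cons j).cons k)
            have s1 : Rw n (k::j::i::k::j::w) (k::i::j::k::j::w) :=
              .cons k (.comm hij.symm (k::j::w))
            have s2 : Rw n (k::i::j::k::j::w) (k::i::k::j::k::w) :=
              .cons k (.cons i (.braid hjk w))
            have s3 : Rw n (k::i::k::j::k::w) (i::k::i::j::k::w) :=
              .braid hadj.symm (j::k::w)
            have s4 : Rw n (i::k::i::j::k::w) (i::k::j::i::k::w) :=
              .cons i (.cons k (.comm hij (k::w)))
            exact e2.trans ((((Equiv'.of s1).trans (.of s2)).trans (.of s3)).trans (.of s4))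
      · -- Far j k
        rw [comp_far hjk.symm] at hd1
        rcases trichotomy i j with hij | hij | hij
        · -- i = j & Far j k & Adj i k : impossible
          subst hij
          exact absurd hjk (adj_not_far hadj)
        · -- T2c : Adj i j, Far j k, Adj i k
          have hL1 : (k::a₃).length + 1 < ℓ := by simp at hlen ⊢; omega
          obtain ⟨f, hf1, hf2⟩ := keyS i (k::a₃) j d hL1 hd1
          rw [comp_adj hij] at hf1
          rw [comp_adj hij.symm] at hf2
          have hL2 : a₃.length + 1 < ℓ := by simp at hlen; omega
          obtain ⟨u, hu1, hu2⟩ := keyS k a₃ j (i::f) hL2 hf1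
          rw [comp_far hjk.symm] at hu1
          rw [comp_far hjk] at hu2
          have hL3 : f.length + 1 < ℓ := by
            have := hf1.length; simp at this hlen; omega
          obtain ⟨v', hv1, hv2⟩ := keyS i f k u hL3 hu2
          rw [comp_adj hadj] at hv1
          rw [comp_adj hadj.symm] at hv2
          refine ⟨k::i::j::v', ?_, ?_⟩
          · rw [comp_adj hij]
            have e1 : Equiv' n (k::i::a₃) (k::i::j::i::k::v') :=
              ((hu1.trans (hv2.cons j)).cons i).cons k
            have s1 : Rw n (k::i::j::i::k::v') (k::j::i::j::k::v') :=
              .cons k (.braid hij (k::v'))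
            have s2 : Rw n (k::j::i::j::k::v') (j::k::i::j::k::v') :=
              .comm hjk.symm (i::j::k::v')
            have s3 : Rw n (j::k::i::j::k::v') (j::k::i::k::j::v') :=
              .cons j (.cons k (.cons i (.comm hjk v')))
            have s4 : Rw n (j::k::i::k::j::v') (j::i::k::i::j::v') :=
              .cons j (.braid hadj.symm (j::v'))
            exact e1.trans ((((Equiv'.of s1).trans (.of s2)).trans (.of s3)).trans (.of s4))
          · rw [comp_adj hij.symm]
            rw [comp_far hjk] at hd2
            have e2 : Equiv' n b (k::i::j::k::i::v') :=
              hd2.trans ((hf2.trans ((hv1.cons j).cons i)).cons k)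
            have s1 : Rw n (k::i::j::k::i::v') (k::i::k::j::i::v') :=
              .cons k (.cons i (.comm hjk (i::v')))
            have s2 : Rw n (k::i::k::j::i::v') (i::k::i::j::i::v') :=
              .braid hadj.symm (j::i::v')
            have s3 : Rw n (i::k::i::j::i::v') (i::k::j::i::j::v') :=
              .cons i (.cons k (.braid hij v'))
            have s4 : Rw n (i::k::j::i::j::v') (i::j::k::i::j::v') :=
              .cons i (.comm hjk.symm (i::j::v'))
            exact e2.trans ((((Equiv'.of s1).trans (.of s2)).trans (.of s3)).trans (.of s4))
        · -- T2a : Far i j, Far j k, Adj i k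
          have hL1 : (k::a₃).length + 1 < ℓ := by simp at hlen ⊢; omega
          obtain ⟨f, hf1, hf2⟩ := keyS i (k::a₃) j d hL1 hd1
          rw [comp_far hij] at hf1
          rw [comp_far hij.symm] at hf2
          have hL2 : a₃.length + 1 < ℓ := by simp at hlen; omega
          obtain ⟨u, hu1, hu2⟩ := keyS k a₃ j f hL2 hf1
          rw [comp_far hjk.symm] at hu1
          rw [comp_far hjk] at hu2
          refine ⟨k::i::u, ?_, ?_⟩
          · rw [comp_far hij]
            have e1 : Equiv' n (k::i::a₃) (k::i::j::u) := ((hu1.cons i).cons k)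
            have s1 : Rw n (k::i::j::u) (k::j::i::u) := .cons k (.comm hij u)
            have s2 : Rw n (k::j::i::u) (j::k::i::u) := .comm hjk.symm (i::u)
            exact e1.trans ((Equiv'.of s1).trans (.of s2))
          · rw [comp_far hij.symm]
            rw [comp_far hjk] at hd2
            have e2 : Equiv' n b (k::i::k::u) :=
              hd2.trans ((hf2.trans (hu2.cons i)).cons k)
            exact e2.trans (.of (.braid hadj.symm u))


-- ===================== Module C : cancellativity =====================

lemma key_equiv {i j : Fin (n-1)} {a b : List (Fin (n-1))} (h : Equiv' n (i::a) (j::b)) :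
    ∃ c, Equiv' n a (comp i j ++ c) ∧ Equiv' n b (comp j i ++ c) := by
  obtain ⟨N, hc⟩ := equiv_iff_chain.mp h
  exact key (a.length + 1) N i a j b le_rfl hc

lemma gen_left_cancel {i : Fin (n-1)} {x y : BraidMonoid n}
    (h : gen i * x = gen i * y) : x = y := by
  obtain ⟨u, rfl⟩ := mkw_surjective x
  obtain ⟨v, rfl⟩ := mkw_surjective y
  rw [← mkw_cons, ← mkw_cons, mkw_eq_iff] at h
  obtain ⟨c, hc1, hc2⟩ := key_equiv h
  rw [comp_self] at hc1 hc2
  simp only [List.nil_append] at hc1 hc2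
  rw [mkw_eq_iff]
  exact hc1.trans hc2.symm

lemma braid_left_cancel (z : BraidMonoid n) {x y : BraidMonoid n}
    (h : z * x = z * y) : x = y := by
  obtain ⟨w, rfl⟩ := mkw_surjective z
  induction w with
  | nil => simpa [mkw_nil] using h
  | cons i w ih =>
      rw [mkw_cons, mul_assoc, mul_assoc] at h
      exact ih (gen_left_cancel h)

lemma Equiv'.rev {u v : List (Fin (n-1))} (h : Equiv' n u v) :
    Equiv' n u.reverse v.reverse := by
  have step : ∀ {u v : List (Fin (n-1))}, Rw n u v → Equiv' n u.reverse v.reverse := by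
    intro u v h
    induction h with
    | @comm i j h t =>
        simp only [List.reverse_cons]
        have e : Equiv' n ([j] ++ [i]) ([i] ++ [j]) := .of (.comm h.symm [])
        have := Equiv'.append_left (t.reverse) e
        simpa [List.append_assoc] using this
    | @braid i j h t =>
        simp only [List.reverse_cons]
        have e : Equiv' n ([i] ++ [j] ++ [i]) ([j] ++ [i] ++ [j]) := .of (.braid h [])
        have := Equiv'.append_left (t.reverse) e
        simpa [List.append_assoc] using this
    | @cons x u v _ ih =>
        simp only [List.reverse_cons]
        exact ih.append_right [x]
  induction h with
  | refl => exact .refl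
  | tail _ h ih => exact ih.trans (step h)

lemma braid_right_cancel (z : BraidMonoid n) {x y : BraidMonoid n}
    (h : x * z = y * z) : x = y := by
  obtain ⟨u, rfl⟩ := mkw_surjective x
  obtain ⟨v, rfl⟩ := mkw_surjective y
  obtain ⟨w, rfl⟩ := mkw_surjective z
  rw [← mkw_append, ← mkw_append, mkw_eq_iff] at h
  have h' := h.rev
  simp only [List.reverse_append] at h'
  rw [mkw_eq_iff]
  have : Equiv' n u.reverse v.reverse := by
    have := braid_left_cancel (mkw n w.reverse) (x := mkw n u.reverse) (y := mkw n v.reverse)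
      (by rw [← mkw_append, ← mkw_append]; exact mkw_eq_iff.mpr h')
    exact mkw_eq_iff.mp this
  simpa using this.rev

-- ===================== Module C' : length and generation =====================

section Len
variable (len : BraidMonoid n → ℕ)
  (hlen_mul : ∀ x y : BraidMonoid n, len (x * y) = len x + len y)

include hlen_mul

lemma len_one' : len 1 = 0 := by
  have := hlen_mul 1 1
  simp at this
  omega

variable (hlen_gen : ∀ i : Fin (n - 1), len (gen i) = 1)
include hlen_gen

lemma len_mkw (l : List (Fin (n-1))) : len (mkw n l) = l.length := by
  induction l with
  | nil => simpa [mkw_nil] using len_one' len hlen_mul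
  | cons i l ih => rw [mkw_cons, hlen_mul, hlen_gen, ih]; simp [Nat.add_comm]

lemma eq_one_of_len_zero {x : BraidMonoid n} (hx : len x = 0) : x = 1 := by
  obtain ⟨l, rfl⟩ := mkw_surjective x
  rw [len_mkw len hlen_mul hlen_gen] at hx
  rw [List.length_eq_zero_iff] at hx
  rw [hx, mkw_nil]

lemma exists_last_gen {x : BraidMonoid n} (hx : x ≠ 1) :
    ∃ (y : BraidMonoid n) (i : Fin (n-1)), x = y * gen i := by
  obtain ⟨l, rfl⟩ := mkw_surjective x
  rcases List.eq_nil_or_concat l with rfl | ⟨l', i, rfl⟩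
  · exact absurd mkw_nil hx
  · refine ⟨mkw n l', i, ?_⟩
    rw [show l'.concat i = l' ++ [i] from List.concat_eq_append, mkw_append,
      show ([i] : List (Fin (n-1))) = i :: [] from rfl, mkw_cons, mkw_nil, mul_one]

end Len


lemma sum_powerset_neg_one_real {α : Type*} [DecidableEq α] (M : Finset α) :
    (∑ X ∈ M.powerset, (-1 : ℝ) ^ X.card) = if M = ∅ then 1 else 0 := by
  have hz := Finset.sum_powerset_neg_one_pow_card (x := M)
  have : (∑ X ∈ M.powerset, (-1 : ℝ) ^ X.card)
      = ((∑ X ∈ M.powerset, (-1 : ℤ) ^ X.card : ℤ) : ℝ) := by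
    push_cast
    rfl
  rw [this, hz]
  split <;> simp



/-- If `h` is the Möbius transform of `x ↦ p^{ℓ(x)}` on simple
braids and `g(x) = Σ_{y ∈ S, x → y} h(y)`, then `h(x) = p^{ℓ(x)}·g(x)` on `S`. -/
theorem mobius_transform_factorization (n : ℕ) (hn : 2 ≤ n)
    (len : BraidMonoid n → ℕ)
    (hlen_mul : ∀ x y : BraidMonoid n, len (x * y) = len x + len y)
    (hlen_gen : ∀ i : Fin (n - 1), len (gen i) = 1)
    (Δhat : Finset (Fin (n - 1)) → BraidMonoid n)
    (hlub_l : ∀ X : Finset (Fin (n - 1)),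
      (∀ i ∈ X, ldvd (gen i) (Δhat X)) ∧
        ∀ z : BraidMonoid n, (∀ i ∈ X, ldvd (gen i) z) → ldvd (Δhat X) z)
    (hlub_r : ∀ X : Finset (Fin (n - 1)),
      (∀ i ∈ X, rdvd (gen i) (Δhat X)) ∧
        ∀ z : BraidMonoid n, (∀ i ∈ X, rdvd (gen i) z) → rdvd (Δhat X) z)
    (hΔ : Δhat Finset.univ = garside n)
    (hS : (Simples n).Finite)
    (p : ℝ) (h g : BraidMonoid n → ℝ)
    (hdef : ∀ x : BraidMonoid n, h x = ∑ X : Finset (Fin (n - 1)),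
        if x * Δhat X ∈ Simples n then (-1 : ℝ) ^ X.card * p ^ len (x * Δhat X) else 0)
    (gdef : ∀ x : BraidMonoid n, g x = ∑ y ∈ hS.toFinset, if Arrow x y then h y else 0) :
    ∀ x ∈ Simples n, h x = p ^ len x * g x := by
  classical
  intro x hx
  have ldvd_refl : ∀ a : BraidMonoid n, ldvd a a := fun a => ⟨1, (mul_one a).symm⟩
  have ldvd_trans : ∀ {a b c : BraidMonoid n}, ldvd a b → ldvd b c → ldvd a c := by
    rintro a b c ⟨u, rfl⟩ ⟨v, rfl⟩; exact ⟨u * v, mul_assoc a u v⟩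
  have len1 : len (1 : BraidMonoid n) = 0 := len_one' len hlen_mul
  have genld : ∀ i : Fin (n-1), ldvd (gen i) (garside n) :=
    fun i => hΔ ▸ (hlub_l Finset.univ).1 i (Finset.mem_univ i)
  have ΔhatSimple : ∀ X : Finset (Fin (n-1)), Δhat X ∈ Simples n :=
    fun X => (hlub_l X).2 (garside n) (fun i _ => genld i)
  have memF : ∀ {y : BraidMonoid n}, y ∈ hS.toFinset ↔ y ∈ Simples n :=
    fun {y} => Set.Finite.mem_toFinset hS
  -- ===== the Möbius inversion =====
  have inv : ∀ z, z ∈ Simples n →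
      (∑ y ∈ hS.toFinset, if ldvd z y then h y else 0) = p ^ len z := by
    intro z hz
    have claimQ : ∀ w, w ∈ Simples n →
        (∑ X : Finset (Fin (n-1)), if (∃ y, y * Δhat X = w ∧ ldvd z y)
            then ((-1 : ℝ) ^ X.card) else 0) = if w = z then (1:ℝ) else 0 := by
      intro w hw
      by_cases hzw : ldvd z w
      · set M : Finset (Fin (n-1)) :=
          Finset.univ.filter (fun i => ∃ y, w = y * gen i ∧ ldvd z y) with hM
        have hQM : ∀ X : Finset (Fin (n-1)),
            (∃ y, y * Δhat X = w ∧ ldvd z y) ↔ X ∈ M.powerset := by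
          intro X
          rw [Finset.mem_powerset]
          constructor
          · rintro ⟨y, hyw, hzy⟩ i hiX
            obtain ⟨u, hu⟩ := (hlub_r X).1 i hiX
            rw [hM, Finset.mem_filter]
            refine ⟨Finset.mem_univ i, y * u, ?_, ?_⟩
            · rw [← hyw, hu, mul_assoc]
            · obtain ⟨s, rfl⟩ := hzy
              exact ⟨s * u, mul_assoc z s u⟩
          · intro hXM
            obtain ⟨t, ht⟩ := hzw
            have hgt : ∀ i ∈ X, rdvd (gen i) t := by
              intro i hiX
              have hi := hXM hiX
              rw [hM, Finset.mem_filter] at hi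
              obtain ⟨-, y, hyw, s, rfl⟩ := hi
              have : z * t = z * (s * gen i) := by rw [← ht, hyw, mul_assoc]
              exact ⟨s, braid_left_cancel z this⟩
            obtain ⟨s, hs⟩ := (hlub_r X).2 t hgt
            exact ⟨z * s, by rw [mul_assoc, ← hs, ← ht], ⟨s, rfl⟩⟩
        have hMz : (M = ∅) ↔ w = z := by
          constructor
          · intro hMe
            obtain ⟨t, ht⟩ := hzw
            by_cases h1 : t = 1
            · rw [ht, h1, mul_one]
            · obtain ⟨s, i, rfl⟩ := exists_last_gen len hlen_mul hlen_gen h1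
              exfalso
              have hiM : i ∈ M := by
                rw [hM, Finset.mem_filter]
                exact ⟨Finset.mem_univ i, z * s, by rw [ht, mul_assoc], ⟨s, rfl⟩⟩
              rw [hMe] at hiM
              exact absurd hiM (Finset.notMem_empty i)
          · intro hwz
            rw [Finset.eq_empty_iff_forall_notMem]
            intro i hi
            rw [hM, Finset.mem_filter] at hi
            obtain ⟨-, y, hwy, s, rfl⟩ := hi
            have h0 : z * (s * gen i) = z * 1 := by
              rw [mul_one, ← mul_assoc, ← hwy]; exact hwz
            have h1 : s * gen i = 1 := braid_left_cancel z h0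
            have hl := hlen_mul s (gen i)
            rw [h1, len1, hlen_gen] at hl
            omega
        calc (∑ X : Finset (Fin (n-1)), if (∃ y, y * Δhat X = w ∧ ldvd z y)
                then ((-1 : ℝ) ^ X.card) else 0)
            = ∑ X : Finset (Fin (n-1)), if X ∈ M.powerset then ((-1 : ℝ) ^ X.card) else 0 := by
              refine Finset.sum_congr rfl (fun X _ => ?_)
              exact if_congr (hQM X) rfl rfl
          _ = ∑ X ∈ M.powerset, ((-1 : ℝ) ^ X.card) := by
              rw [Finset.sum_ite_mem, Finset.univ_inter]
          _ = if M = ∅ then (1:ℝ) else 0 := sum_powerset_neg_one_real M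
          _ = if w = z then (1:ℝ) else 0 := if_congr hMz rfl rfl
      · have hQ : ∀ X : Finset (Fin (n-1)), ¬ (∃ y, y * Δhat X = w ∧ ldvd z y) := by
          rintro X ⟨y, hyw, hzy⟩
          exact hzw (ldvd_trans hzy ⟨Δhat X, hyw.symm⟩)
        have hwz : w ≠ z := by
          rintro rfl
          exact hzw (ldvd_refl w)
        simp [hQ, hwz]
    calc (∑ y ∈ hS.toFinset, if ldvd z y then h y else 0)
        = ∑ y ∈ hS.toFinset, ∑ X : Finset (Fin (n-1)),
            (if ldvd z y ∧ y * Δhat X ∈ Simples n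
              then (-1:ℝ)^X.card * p ^ len (y * Δhat X) else 0) := by
          refine Finset.sum_congr rfl (fun y hy => ?_)
          by_cases hzy : ldvd z y
          · simp only [hzy, if_true, true_and, hdef y]
          · simp [hzy]
      _ = ∑ X : Finset (Fin (n-1)), ∑ y ∈ hS.toFinset,
            (if ldvd z y ∧ y * Δhat X ∈ Simples n
              then (-1:ℝ)^X.card * p ^ len (y * Δhat X) else 0) := Finset.sum_comm
      _ = ∑ X : Finset (Fin (n-1)), ∑ w ∈ hS.toFinset,
            (if (∃ y, y * Δhat X = w ∧ ldvd z y)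
              then (-1:ℝ)^X.card * p ^ len w else 0) := by
          refine Finset.sum_congr rfl (fun X _ => ?_)
          rw [← Finset.sum_filter, ← Finset.sum_filter]
          refine Finset.sum_bij (fun y _ => y * Δhat X) ?_ ?_ ?_ ?_
          · intro y hy
            rw [Finset.mem_filter] at hy ⊢
            obtain ⟨hyF, hzy, hyS⟩ := hy
            exact ⟨memF.mpr hyS, ⟨y, rfl, hzy⟩⟩
          · intro y1 h1 y2 h2 heq
            exact braid_right_cancel _ heq
          · intro w hw
            rw [Finset.mem_filter] at hw
            obtain ⟨hwF, y, hyw, hzy⟩ := hw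
            refine ⟨y, ?_, hyw⟩
            rw [Finset.mem_filter]
            have hyS : y ∈ Simples n :=
              ldvd_trans ⟨Δhat X, hyw.symm⟩ (memF.mp hwF)
            exact ⟨memF.mpr hyS, hzy, by rw [hyw]; exact memF.mp hwF⟩
          · intro y hy; rfl
      _ = ∑ w ∈ hS.toFinset, ∑ X : Finset (Fin (n-1)),
            (if (∃ y, y * Δhat X = w ∧ ldvd z y)
              then (-1:ℝ)^X.card * p ^ len w else 0) := Finset.sum_comm
      _ = ∑ w ∈ hS.toFinset, (if w = z then (1:ℝ) else 0) * p ^ len w := by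
          refine Finset.sum_congr rfl (fun w hwF => ?_)
          rw [← claimQ w (memF.mp hwF), Finset.sum_mul]
          refine Finset.sum_congr rfl (fun X _ => ?_)
          split <;> ring
      _ = p ^ len z := by
          rw [show (∑ w ∈ hS.toFinset, (if w = z then (1:ℝ) else 0) * p ^ len w)
              = ∑ w ∈ hS.toFinset, (if w = z then p ^ len w else 0) from
            Finset.sum_congr rfl (fun w _ => by split <;> ring)]
          rw [Finset.sum_ite_eq' hS.toFinset z (fun w => p ^ len w)]
          simp [memF.mpr hz]
  -- ===== the set B of allowed extensions of x =====
  set B : Finset (Fin (n-1)) :=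
    Finset.univ.filter (fun i => x * gen i ∈ Simples n) with hB
  have hA : ∀ X : Finset (Fin (n-1)), (x * Δhat X ∈ Simples n) ↔ X ∈ B.powerset := by
    intro X
    rw [Finset.mem_powerset]
    constructor
    · intro hXS i hiX
      obtain ⟨u, hu⟩ := (hlub_l X).1 i hiX
      rw [hB, Finset.mem_filter]
      refine ⟨Finset.mem_univ i, ?_⟩
      refine ldvd_trans ?_ hXS
      exact ⟨u, by rw [hu, mul_assoc]⟩
    · intro hXB
      obtain ⟨c0, hc0⟩ := hx
      have hgen : ∀ i ∈ X, ldvd (gen i) c0 := by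
        intro i hiX
        have hi := hXB hiX
        rw [hB, Finset.mem_filter] at hi
        obtain ⟨-, d, hd⟩ := hi
        have : x * c0 = x * (gen i * d) := by rw [← hc0, hd, mul_assoc]
        exact ⟨d, braid_left_cancel x this⟩
      obtain ⟨e, he⟩ := (hlub_l X).2 c0 hgen
      exact ⟨e, by rw [hc0, he, mul_assoc]⟩
  -- ===== computation of h x =====
  have hhx : h x = p ^ len x * ∑ X ∈ B.powerset, (-1:ℝ)^X.card * p ^ len (Δhat X) := by
    rw [hdef x]
    calc (∑ X : Finset (Fin (n-1)),
            if x * Δhat X ∈ Simples n then (-1 : ℝ) ^ X.card * p ^ len (x * Δhat X) else 0)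
        = ∑ X : Finset (Fin (n-1)),
            (if X ∈ B.powerset then (-1 : ℝ) ^ X.card * (p ^ len x * p ^ len (Δhat X)) else 0) := by
          refine Finset.sum_congr rfl (fun X _ => ?_)
          exact if_congr (hA X) (by rw [hlen_mul, pow_add]) rfl
      _ = ∑ X ∈ B.powerset, (-1 : ℝ) ^ X.card * (p ^ len x * p ^ len (Δhat X)) := by
          rw [Finset.sum_ite_mem, Finset.univ_inter]
      _ = p ^ len x * ∑ X ∈ B.powerset, (-1:ℝ)^X.card * p ^ len (Δhat X) := by
          rw [Finset.mul_sum]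
          exact Finset.sum_congr rfl (fun X _ => by ring)
  -- ===== computation of g x =====
  have pow_inter : ∀ (C D : Finset (Fin (n-1))),
      C.powerset ∩ D.powerset = (C ∩ D).powerset := by
    intro C D
    ext X
    simp only [Finset.mem_inter, Finset.mem_powerset, Finset.subset_inter_iff]
  have hgx : g x = ∑ X ∈ B.powerset, (-1:ℝ)^X.card * p ^ len (Δhat X) := by
    rw [gdef x]
    have step1 : ∀ y, y ∈ hS.toFinset →
        (if Arrow x y then h y else 0)
          = ∑ X ∈ B.powerset, (-1:ℝ)^X.card * (if ldvd (Δhat X) y then h y else 0) := by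
      intro y hy
      set Ly : Finset (Fin (n-1)) :=
        Finset.univ.filter (fun i => ldvd (gen i) y) with hLy
      have harrow : Arrow x y ↔ B ∩ Ly = ∅ := by
        rw [Finset.eq_empty_iff_forall_notMem]
        constructor
        · intro ha i hi
          rw [Finset.mem_inter, hB, hLy, Finset.mem_filter, Finset.mem_filter] at hi
          exact (ha hi.2.2) hi.1.2
        · intro hemp i hiL
          show x * gen i ∉ Simples n
          by_contra hcon
          exact hemp i (by
            rw [Finset.mem_inter, hB, hLy, Finset.mem_filter, Finset.mem_filter]
            exact ⟨⟨Finset.mem_univ i, hcon⟩, Finset.mem_univ i, hiL⟩)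
      have hXLy : ∀ X : Finset (Fin (n-1)), ldvd (Δhat X) y ↔ X ∈ Ly.powerset := by
        intro X
        rw [Finset.mem_powerset]
        constructor
        · intro hXy i hiX
          obtain ⟨u, hu⟩ := (hlub_l X).1 i hiX
          rw [hLy, Finset.mem_filter]
          exact ⟨Finset.mem_univ i, ldvd_trans ⟨u, hu⟩ hXy⟩
        · intro hXL
          refine (hlub_l X).2 y (fun i hiX => ?_)
          have hi := hXL hiX
          rw [hLy, Finset.mem_filter] at hi
          exact hi.2
      calc (if Arrow x y then h y else 0)
          = (if B ∩ Ly = ∅ then (1:ℝ) else 0) * h y := by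
            rw [if_congr harrow rfl rfl]; split <;> ring
        _ = (∑ X ∈ (B ∩ Ly).powerset, (-1:ℝ)^X.card) * h y := by
            rw [sum_powerset_neg_one_real]
        _ = (∑ X ∈ B.powerset, (if X ∈ Ly.powerset then (-1:ℝ)^X.card else 0)) * h y := by
            rw [Finset.sum_ite_mem, pow_inter]
        _ = ∑ X ∈ B.powerset, (-1:ℝ)^X.card * (if ldvd (Δhat X) y then h y else 0) := by
            rw [Finset.sum_mul]
            refine Finset.sum_congr rfl (fun X _ => ?_)
            rw [if_congr (hXLy X).symm rfl rfl]
            split <;> ring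
    calc (∑ y ∈ hS.toFinset, if Arrow x y then h y else 0)
        = ∑ y ∈ hS.toFinset, ∑ X ∈ B.powerset,
            (-1:ℝ)^X.card * (if ldvd (Δhat X) y then h y else 0) :=
          Finset.sum_congr rfl step1
      _ = ∑ X ∈ B.powerset, ∑ y ∈ hS.toFinset,
            (-1:ℝ)^X.card * (if ldvd (Δhat X) y then h y else 0) := Finset.sum_comm
      _ = ∑ X ∈ B.powerset, (-1:ℝ)^X.card * p ^ len (Δhat X) := by
          refine Finset.sum_congr rfl (fun X _ => ?_)
          rw [← Finset.mul_sum, inv (Δhat X) (ΔhatSimple X)]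
  rw [hhx, hgx]


end BraidMeasure
end

section
/- Let f, h : Br_n → ℝ be arbitrary functions. Then h is the graded Möbius transform of f, i.e. h(x) = Σ_{X ⊆ Σ with τ(x·Δ̂(X)) = τ(x)} (−1)^{|X|} f(x·Δ̂(X)) for every x ∈ Br_n, if and only if f(x) = Σ_{y ∈ Br_n with τ(x·y) = τ(x)} h(x·y) for every x ∈ Br_n (the latter being a finite sum, as {y : τ(x·y) = τ(x)} is finite). -/
open scoped Classical

namespace BraidMeasure

namespace Words

variable {m : ℕ}

def Far (i j : Fin m) : Prop := (i : ℕ) + 2 ≤ (j : ℕ) ∨ (j : ℕ) + 2 ≤ (i : ℕ)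
def Adj (i j : Fin m) : Prop := (i : ℕ) + 1 = (j : ℕ) ∨ (j : ℕ) + 1 = (i : ℕ)

lemma Far.symm {i j : Fin m} (h : Far i j) : Far j i := h.elim Or.inr Or.inl
lemma Adj.symm {i j : Fin m} (h : Adj i j) : Adj j i := h.elim Or.inr Or.inl
lemma far_self_absurd {i j : Fin m} (h : Far i j) (he : i = j) : False := by
  subst he; rcases h with h | h <;> omega
lemma adj_self_absurd {i j : Fin m} (h : Adj i j) (he : i = j) : False := by
  subst he; rcases h with h | h <;> omega
lemma far_adj_absurd {i j : Fin m} (h : Far i j) (h' : Adj i j) : False := by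
  rcases h with h | h <;> rcases h' with h' | h' <;> omega
lemma adj_adj_adj_absurd {i j k : Fin m} (h1 : Adj i k) (h2 : Adj k j) (h3 : Adj i j) :
    False := by
  rcases h1 with h1 | h1 <;> rcases h2 with h2 | h2 <;> rcases h3 with h3 | h3 <;> omega
lemma tri (i j : Fin m) : i = j ∨ Far i j ∨ Adj i j := by
  rcases Nat.lt_trichotomy (i : ℕ) (j : ℕ) with h | h | h
  · rcases Nat.lt_or_ge ((i:ℕ)+1) j with h' | h'
    · exact Or.inr (Or.inl (Or.inl h'))
    · exact Or.inr (Or.inr (Or.inl (by omega)))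
  · exact Or.inl (Fin.ext h)
  · rcases Nat.lt_or_ge ((j:ℕ)+1) i with h' | h'
    · exact Or.inr (Or.inl (Or.inr h'))
    · exact Or.inr (Or.inr (Or.inr (by omega)))

inductive Step (m : ℕ) : List (Fin m) → List (Fin m) → Prop
  | comm (a b : List (Fin m)) (i j : Fin m) (h : Far i j) :
      Step m (a ++ i :: j :: b) (a ++ j :: i :: b)
  | braid (a b : List (Fin m)) (i j : Fin m) (h : Adj i j) :
      Step m (a ++ i :: j :: i :: b) (a ++ j :: i :: j :: b)

lemma Step.symm {u v : List (Fin m)} (h : Step m u v) : Step m v u := by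
  cases h with
  | comm a b i j h => exact Step.comm a b j i h.symm
  | braid a b i j h => exact Step.braid a b j i h.symm

lemma Step.length_eq {u v : List (Fin m)} (h : Step m u v) : u.length = v.length := by
  cases h <;> simp

lemma Step.two_le_length {u v : List (Fin m)} (h : Step m u v) : 2 ≤ u.length := by
  cases h <;> simp <;> omega

def Eqv (m : ℕ) : List (Fin m) → List (Fin m) → Prop := Relation.ReflTransGen (Step m)

lemma Eqv.rfl {u : List (Fin m)} : Eqv m u u := Relation.ReflTransGen.refl
lemma Eqv.trans {u v w : List (Fin m)} (h : Eqv m u v) (h' : Eqv m v w) : Eqv m u w :=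
  Relation.ReflTransGen.trans h h'
lemma Eqv.symm {u v : List (Fin m)} (h : Eqv m u v) : Eqv m v u := by
  induction h with
  | refl => exact Eqv.rfl
  | tail _ hstep ih => exact Relation.ReflTransGen.trans (Relation.ReflTransGen.single hstep.symm) ih
lemma Eqv.single {u v : List (Fin m)} (h : Step m u v) : Eqv m u v :=
  Relation.ReflTransGen.single h

lemma Eqv.length_eq {u v : List (Fin m)} (h : Eqv m u v) : u.length = v.length := by
  induction h with
  | refl => rfl
  | tail _ hstep ih => exact ih.trans hstep.length_eq

lemma Step.append_left {u v : List (Fin m)} (w : List (Fin m)) (h : Step m u v) :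
    Step m (w ++ u) (w ++ v) := by
  cases h with
  | comm a b i j h => simpa [List.append_assoc] using Step.comm (w ++ a) b i j h
  | braid a b i j h => simpa [List.append_assoc] using Step.braid (w ++ a) b i j h

lemma Step.append_right {u v : List (Fin m)} (w : List (Fin m)) (h : Step m u v) :
    Step m (u ++ w) (v ++ w) := by
  cases h with
  | comm a b i j h => simpa [List.append_assoc] using Step.comm a (b ++ w) i j h
  | braid a b i j h => simpa [List.append_assoc] using Step.braid a (b ++ w) i j h

lemma Eqv.append_left {u v : List (Fin m)} (w : List (Fin m)) (h : Eqv m u v) :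
    Eqv m (w ++ u) (w ++ v) := by
  induction h with
  | refl => exact Eqv.rfl
  | tail _ hstep ih => exact ih.trans (Eqv.single (hstep.append_left w))

lemma Eqv.append_right {u v : List (Fin m)} (w : List (Fin m)) (h : Eqv m u v) :
    Eqv m (u ++ w) (v ++ w) := by
  induction h with
  | refl => exact Eqv.rfl
  | tail _ hstep ih => exact ih.trans (Eqv.single (hstep.append_right w))

lemma Eqv.cons {u v : List (Fin m)} (i : Fin m) (h : Eqv m u v) :
    Eqv m (i :: u) (i :: v) := h.append_left [i]

lemma e_swap {i j : Fin m} (h : Far i j) (w : List (Fin m)) :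
    Eqv m (i :: j :: w) (j :: i :: w) := Eqv.single (Step.comm [] w i j h)

lemma e_braid {i j : Fin m} (h : Adj i j) (w : List (Fin m)) :
    Eqv m (i :: j :: i :: w) (j :: i :: j :: w) := Eqv.single (Step.braid [] w i j h)

inductive EqN (m : ℕ) : ℕ → List (Fin m) → List (Fin m) → Prop
  | refl (w : List (Fin m)) : EqN m 0 w w
  | step {u v w : List (Fin m)} {k : ℕ} (h : Step m u v) (h' : EqN m k v w) :
      EqN m (k + 1) u w

lemma EqN.snoc {u v w : List (Fin m)} {k : ℕ} (h : EqN m k u v) (h' : Step m v w) :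
    EqN m (k + 1) u w := by
  induction h with
  | refl => exact EqN.step h' (EqN.refl _)
  | step hs _ ih => exact EqN.step hs (ih h')

lemma eqv_iff_eqN {u v : List (Fin m)} : Eqv m u v ↔ ∃ k, EqN m k u v := by
  constructor
  · intro h
    induction h with
    | refl => exact ⟨0, EqN.refl _⟩
    | tail _ hstep ih => obtain ⟨k, hk⟩ := ih; exact ⟨k + 1, hk.snoc hstep⟩
  · rintro ⟨k, hk⟩
    induction hk with
    | refl => exact Eqv.rfl
    | step hs _ ih => exact (Eqv.single hs).trans ih

lemma EqN.length_eq {k : ℕ} {u v : List (Fin m)} (h : EqN m k u v) :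
    u.length = v.length := (eqv_iff_eqN.2 ⟨k, h⟩).length_eq

lemma EqN.eqv {k : ℕ} {u v : List (Fin m)} (h : EqN m k u v) : Eqv m u v :=
  eqv_iff_eqN.2 ⟨k, h⟩

def Concl (m : ℕ) (i j : Fin m) (U V : List (Fin m)) : Prop :=
  (i = j → Eqv m U V) ∧
  (Far i j → ∃ Z, Eqv m U (j :: Z) ∧ Eqv m V (i :: Z)) ∧
  (Adj i j → ∃ Z, Eqv m U (j :: i :: Z) ∧ Eqv m V (i :: j :: Z))

lemma concl_refl (i : Fin m) (U V : List (Fin m)) (h : Eqv m U V) : Concl m i i U V :=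
  ⟨fun _ => h, fun hF => absurd rfl (fun he => far_self_absurd hF he),
    fun hA => absurd rfl (fun he => adj_self_absurd hA he)⟩


lemma step_cons_inversion {i : Fin m} {U v : List (Fin m)} (hs : Step m (i :: U) v) :
    (∃ U', Step m U U' ∧ v = i :: U') ∨
    (∃ (q : Fin m) (b : List (Fin m)), Far i q ∧ U = q :: b ∧ v = q :: i :: b) ∨
    (∃ (q : Fin m) (b : List (Fin m)), Adj i q ∧ U = q :: i :: b ∧ v = q :: i :: q :: b) := by
  have main : ∀ u v : List (Fin m), Step m u v → ∀ (i : Fin m) (U : List (Fin m)),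
      u = i :: U →
      (∃ U', Step m U U' ∧ v = i :: U') ∨
      (∃ (q : Fin m) (b : List (Fin m)), Far i q ∧ U = q :: b ∧ v = q :: i :: b) ∨
      (∃ (q : Fin m) (b : List (Fin m)), Adj i q ∧ U = q :: i :: b ∧ v = q :: i :: q :: b) := by
    intro u v hs
    cases hs with
    | comm a b p q hpq =>
      intro i U heq
      cases a with
      | nil =>
        simp only [List.nil_append, List.cons.injEq] at heq
        obtain ⟨rfl, rfl⟩ := heq
        exact Or.inr (Or.inl ⟨q, b, hpq, rfl, rfl⟩)
      | cons c a' =>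
        simp only [List.cons_append, List.cons.injEq] at heq
        obtain ⟨rfl, rfl⟩ := heq
        exact Or.inl ⟨a' ++ q :: p :: b, Step.comm a' b p q hpq, rfl⟩
    | braid a b p q hpq =>
      intro i U heq
      cases a with
      | nil =>
        simp only [List.nil_append, List.cons.injEq] at heq
        obtain ⟨rfl, rfl⟩ := heq
        exact Or.inr (Or.inr ⟨q, b, hpq, rfl, rfl⟩)
      | cons c a' =>
        simp only [List.cons_append, List.cons.injEq] at heq
        obtain ⟨rfl, rfl⟩ := heq
        exact Or.inl ⟨a' ++ q :: p :: q :: b, Step.braid a' b p q hpq, rfl⟩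
  exact main _ _ hs i U rfl

lemma concl_of_eq {i j : Fin m} {U V : List (Fin m)} (he : i = j) (h : Eqv m U V) :
    Concl m i j U V :=
  ⟨fun _ => h, fun hF => (far_self_absurd hF he).elim, fun hA => (adj_self_absurd hA he).elim⟩

lemma concl_of_far {i j : Fin m} {U V : List (Fin m)} (hF : Far i j) (Z : List (Fin m))
    (h1 : Eqv m U (j :: Z)) (h2 : Eqv m V (i :: Z)) : Concl m i j U V :=
  ⟨fun he => (far_self_absurd hF he).elim, fun _ => ⟨Z, h1, h2⟩,
    fun hA => (far_adj_absurd hF hA).elim⟩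

lemma concl_of_adj {i j : Fin m} {U V : List (Fin m)} (hA : Adj i j) (Z : List (Fin m))
    (h1 : Eqv m U (j :: i :: Z)) (h2 : Eqv m V (i :: j :: Z)) : Concl m i j U V :=
  ⟨fun he => (adj_self_absurd hA he).elim, fun hF => (far_adj_absurd hF hA).elim,
    fun _ => ⟨Z, h1, h2⟩⟩

lemma concl_transport {i j : Fin m} {U U' V : List (Fin m)} (hU : Eqv m U U')
    (C : Concl m i j U' V) : Concl m i j U V :=
  ⟨fun he => hU.trans (C.1 he),
    fun hF => let ⟨Z, h1, h2⟩ := C.2.1 hF; ⟨Z, hU.trans h1, h2⟩,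
    fun hA => let ⟨Z, h1, h2⟩ := C.2.2 hA; ⟨Z, hU.trans h1, h2⟩⟩

theorem key (m : ℕ) : ∀ (L k : ℕ) {i j : Fin m} {U V : List (Fin m)},
    U.length ≤ L → EqN m k (i :: U) (j :: V) → Concl m i j U V := by
  intro L
  induction L with
  | zero =>
    intro k i j U V hlen hE
    have hU : U = [] := List.eq_nil_of_length_eq_zero (Nat.le_zero.1 hlen)
    subst hU
    cases hE with
    | refl => exact concl_of_eq rfl Eqv.rfl
    | step hs h' => exact absurd hs.two_le_length (by simp)
  | succ L IHL =>
    have KEY : ∀ {i j : Fin m} {U V : List (Fin m)}, U.length ≤ L →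
        Eqv m (i :: U) (j :: V) → Concl m i j U V := by
      intro i j U V h hE
      obtain ⟨k, hk⟩ := eqv_iff_eqN.1 hE
      exact IHL k h hk
    intro k
    induction k with
    | zero =>
      intro i j U V hlen hE
      cases hE
      exact concl_of_eq rfl Eqv.rfl
    | succ k IHk =>
      intro i j U V hlen hE
      obtain ⟨_, hs, hrest⟩ : ∃ w, Step m (i :: U) w ∧ EqN m k w (j :: V) := by
        cases hE with
        | step hs h' => exact ⟨_, hs, h'⟩
      rcases step_cons_inversion hs with ⟨U1, hstep, rfl⟩ | ⟨q, b, hiq, rfl, rfl⟩ |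
        ⟨q, b, hiq, rfl, rfl⟩
      · -- Case A : the first move is inside U
        have hlen1 : U1.length ≤ L + 1 := by rw [← hstep.length_eq]; exact hlen
        exact concl_transport (Eqv.single hstep) (IHk hlen1 hrest)
      · -- Case B1 : first move is a commutation at the head, U = q :: b, Far i q
        have hlen1 : (i :: b).length ≤ L + 1 := by
          simp only [List.length_cons] at hlen ⊢; omega
        have hbL : b.length ≤ L := by simp only [List.length_cons] at hlen; omega
        have C1 : Concl m q j (i :: b) V := IHk hlen1 hrest
        rcases tri q j with rfl | hqj | hqj
        · -- q = j
          exact concl_of_far hiq b Eqv.rfl (C1.1 rfl).symm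
        · -- Far q j
          obtain ⟨W, hUW, hVW⟩ := C1.2.1 hqj
          have hWL : W.length ≤ L := by
            have a1 := hUW.length_eq
            simp only [List.length_cons] at a1; omega
          have C2 : Concl m i j b W := KEY hbL hUW
          rcases tri i j with rfl | hij | hij
          · exact concl_of_eq rfl (((C2.1 rfl).cons q).trans hVW.symm)
          · obtain ⟨W2, h1, h2⟩ := C2.2.1 hij
            refine concl_of_far hij (q :: W2) ?_ ?_
            · exact ((h1.cons q).trans (e_swap hqj W2))
            · exact (hVW.trans (h2.cons q)).trans (e_swap hiq.symm W2)
          · obtain ⟨W2, h1, h2⟩ := C2.2.2 hij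
            refine concl_of_adj hij (q :: W2) ?_ ?_
            · exact ((h1.cons q).trans (e_swap hqj (i :: W2))).trans
                ((e_swap hiq.symm W2).cons j)
            · exact ((hVW.trans (h2.cons q)).trans (e_swap hiq.symm (j :: W2))).trans
                ((e_swap hqj W2).cons i)
        · -- Adj q j
          obtain ⟨W, hUW, hVW⟩ := C1.2.2 hqj
          have hWL : W.length ≤ L := by
            have a1 := hUW.length_eq
            simp only [List.length_cons] at a1; omega
          have C2 : Concl m i j b (q :: W) := KEY hbL hUW
          rcases tri i j with rfl | hij | hij
          · exact (far_adj_absurd hiq.symm hqj).elim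
          · obtain ⟨W2, h1, h2⟩ := C2.2.1 hij
            have C3 : Concl m q i W W2 := KEY hWL h2
            obtain ⟨W3, h3, h4⟩ := C3.2.1 hiq.symm
            refine concl_of_far hij (q :: j :: W3) ?_ ?_
            · exact ((h1.cons q).trans ((h4.cons j).cons q)).trans (e_braid hqj W3)
            · exact ((hVW.trans ((h3.cons j).cons q)).trans
                ((e_swap hij.symm W3).cons q)).trans (e_swap hiq.symm (j :: W3))
          · obtain ⟨W2, h1, h2⟩ := C2.2.2 hij
            have hW2L : W2.length ≤ L := by
              have a1 := h2.length_eq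
              simp only [List.length_cons] at a1; omega
            have C3 : Concl m q i W (j :: W2) := KEY hWL h2
            obtain ⟨W3, h3, h4⟩ := C3.2.1 hiq.symm
            have C4 : Concl m j q W2 W3 := KEY hW2L h4
            obtain ⟨W4, h5, h6⟩ := C4.2.2 hqj.symm
            refine concl_of_adj hij (q :: j :: i :: W4) ?_ ?_
            · have e1 : Eqv m (q :: b) (q :: j :: i :: q :: j :: W4) :=
                (h1.cons q).trans (((h5.cons i).cons j).cons q)
              have e2 : Eqv m (q :: j :: i :: q :: j :: W4)
                  (q :: j :: q :: i :: j :: W4) :=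
                ((e_swap hiq (j :: W4)).cons j).cons q
              have e3 : Eqv m (q :: j :: q :: i :: j :: W4)
                  (j :: q :: j :: i :: j :: W4) := e_braid hqj (i :: j :: W4)
              have e4 : Eqv m (j :: q :: j :: i :: j :: W4)
                  (j :: q :: i :: j :: i :: W4) :=
                ((e_braid hij.symm W4).cons q).cons j
              have e5 : Eqv m (j :: q :: i :: j :: i :: W4)
                  (j :: i :: q :: j :: i :: W4) :=
                (e_swap hiq.symm (j :: i :: W4)).cons j
              exact ((e1.trans e2).trans e3).trans (e4.trans e5)
            · have e1 : Eqv m V (q :: j :: i :: j :: q :: W4) :=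
                (hVW.trans ((h3.cons j).cons q)).trans
                  (((h6.cons i).cons j).cons q)
              have e2 : Eqv m (q :: j :: i :: j :: q :: W4)
                  (q :: i :: j :: i :: q :: W4) :=
                (e_braid hij.symm (q :: W4)).cons q
              have e3 : Eqv m (q :: i :: j :: i :: q :: W4)
                  (i :: q :: j :: i :: q :: W4) := e_swap hiq.symm (j :: i :: q :: W4)
              have e4 : Eqv m (i :: q :: j :: i :: q :: W4)
                  (i :: q :: j :: q :: i :: W4) :=
                (((e_swap hiq W4).cons j).cons q).cons i
              have e5 : Eqv m (i :: q :: j :: q :: i :: W4)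
                  (i :: j :: q :: j :: i :: W4) :=
                (e_braid hqj (i :: W4)).cons i
              exact ((e1.trans e2).trans e3).trans (e4.trans e5)
      · -- Case B2 : first move is a braid at the head, U = q :: i :: b, Adj i q
        have hlen1 : (i :: q :: b).length ≤ L + 1 := by
          simp only [List.length_cons] at hlen ⊢; omega
        have hqbL : (q :: b).length ≤ L := by
          simp only [List.length_cons] at hlen ⊢; omega
        have hbL : b.length ≤ L := by simp only [List.length_cons] at hlen; omega
        have C1 : Concl m q j (i :: q :: b) V := IHk hlen1 hrest
        rcases tri q j with rfl | hqj | hqj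
        · -- q = j
          exact concl_of_adj hiq b Eqv.rfl (C1.1 rfl).symm
        · -- Far q j
          obtain ⟨W, hUW, hVW⟩ := C1.2.1 hqj
          have hWL : W.length ≤ L := by
            have a1 := hUW.length_eq
            simp only [List.length_cons] at a1 hlen; omega
          have C2 : Concl m i j (q :: b) W := KEY hqbL hUW
          rcases tri i j with rfl | hij | hij
          · exact (far_adj_absurd hqj hiq.symm).elim
          · obtain ⟨W2, h1, h2⟩ := C2.2.1 hij
            have hW2L : W2.length ≤ L := by
              have a1 := h1.length_eq
              simp only [List.length_cons] at a1 hlen; omega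
            have C3 : Concl m q j b W2 := KEY hbL h1
            obtain ⟨W3, h3, h4⟩ := C3.2.1 hqj
            refine concl_of_far hij (q :: i :: W3) ?_ ?_
            · exact (((h3.cons i).cons q).trans
                ((e_swap hij W3).cons q)).trans (e_swap hqj (i :: W3))
            · exact ((hVW.trans (h2.cons q)).trans ((h4.cons i).cons q)).trans
                (e_braid hiq.symm W3)
          · obtain ⟨W2, h1, h2⟩ := C2.2.2 hij
            have hW2L : W2.length ≤ L := by
              have a1 := h1.length_eq
              simp only [List.length_cons] at a1 hlen; omega
            have C3 : Concl m q j b (i :: W2) := KEY hbL h1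
            obtain ⟨W3, h3, h4⟩ := C3.2.1 hqj
            have C4 : Concl m i q W2 W3 := KEY hW2L h4
            obtain ⟨W4, h5, h6⟩ := C4.2.2 hiq
            refine concl_of_adj hij (q :: i :: j :: W4) ?_ ?_
            · have e1 : Eqv m (q :: i :: b) (q :: i :: j :: i :: q :: W4) :=
                ((h3.cons i).cons q).trans (((h6.cons j).cons i).cons q)
              have e2 : Eqv m (q :: i :: j :: i :: q :: W4)
                  (q :: j :: i :: j :: q :: W4) := (e_braid hij (q :: W4)).cons q
              have e3 : Eqv m (q :: j :: i :: j :: q :: W4)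
                  (j :: q :: i :: j :: q :: W4) := e_swap hqj (i :: j :: q :: W4)
              have e4 : Eqv m (j :: q :: i :: j :: q :: W4)
                  (j :: q :: i :: q :: j :: W4) :=
                (((e_swap hqj.symm W4).cons i).cons q).cons j
              have e5 : Eqv m (j :: q :: i :: q :: j :: W4)
                  (j :: i :: q :: i :: j :: W4) :=
                (e_braid hiq.symm (j :: W4)).cons j
              exact ((e1.trans e2).trans e3).trans (e4.trans e5)
            · have e1 : Eqv m V (q :: i :: j :: q :: i :: W4) :=
                (hVW.trans (h2.cons q)).trans (((h5.cons j).cons i).cons q)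
              have e2 : Eqv m (q :: i :: j :: q :: i :: W4)
                  (q :: i :: q :: j :: i :: W4) :=
                ((e_swap hqj.symm (i :: W4)).cons i).cons q
              have e3 : Eqv m (q :: i :: q :: j :: i :: W4)
                  (i :: q :: i :: j :: i :: W4) := e_braid hiq.symm (j :: i :: W4)
              have e4 : Eqv m (i :: q :: i :: j :: i :: W4)
                  (i :: q :: j :: i :: j :: W4) :=
                ((e_braid hij W4).cons q).cons i
              have e5 : Eqv m (i :: q :: j :: i :: j :: W4)
                  (i :: j :: q :: i :: j :: W4) :=
                (e_swap hqj (i :: j :: W4)).cons i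
              exact ((e1.trans e2).trans e3).trans (e4.trans e5)
        · -- Adj q j
          obtain ⟨W, hUW, hVW⟩ := C1.2.2 hqj
          have hWL : W.length ≤ L := by
            have a1 := hUW.length_eq
            simp only [List.length_cons] at a1 hlen; omega
          have C2 : Concl m i j (q :: b) (q :: W) := KEY hqbL hUW
          rcases tri i j with rfl | hij | hij
          · -- i = j
            have C3 : Concl m q q b W := KEY hbL (C2.1 rfl)
            exact concl_of_eq rfl ((((C3.1 rfl).cons i).cons q).trans hVW.symm)
          · -- Far i j
            obtain ⟨W2, h1, h2⟩ := C2.2.1 hij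
            have hW2L : W2.length ≤ L := by
              have a1 := h1.length_eq
              simp only [List.length_cons] at a1 hlen; omega
            have C3 : Concl m q j b W2 := KEY hbL h1
            obtain ⟨W3, h3, h4⟩ := C3.2.2 hqj
            have C4 : Concl m q i W W2 := KEY hWL h2
            obtain ⟨W4, h5, h6⟩ := C4.2.2 hiq.symm
            have hjW3L : (j :: W3).length ≤ L := by
              have a1 := h4.length_eq
              have a2 := h1.length_eq
              simp only [List.length_cons] at a1 a2 hlen ⊢; omega
            have C5 : Concl m q q (j :: W3) (i :: W4) := KEY hjW3L (h4.symm.trans h6)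
            have hW3L : W3.length ≤ L := by
              simp only [List.length_cons] at hjW3L; omega
            have C6 : Concl m j i W3 W4 := KEY hW3L (C5.1 rfl)
            obtain ⟨W5, h7, h8⟩ := C6.2.1 hij.symm
            refine concl_of_far hij (q :: j :: i :: q :: W5) ?_ ?_
            · have e1 : Eqv m (q :: i :: b) (q :: i :: j :: q :: i :: W5) :=
                ((h3.cons i).cons q).trans ((((h7.cons q).cons j).cons i).cons q)
              have e2 : Eqv m (q :: i :: j :: q :: i :: W5)
                  (q :: j :: i :: q :: i :: W5) := (e_swap hij (q :: i :: W5)).cons q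
              have e3 : Eqv m (q :: j :: i :: q :: i :: W5)
                  (q :: j :: q :: i :: q :: W5) :=
                ((e_braid hiq W5).cons j).cons q
              have e4 : Eqv m (q :: j :: q :: i :: q :: W5)
                  (j :: q :: j :: i :: q :: W5) := e_braid hqj (i :: q :: W5)
              exact (e1.trans e2).trans (e3.trans e4)
            · have e1 : Eqv m V (q :: j :: i :: q :: j :: W5) :=
                (hVW.trans ((h5.cons j).cons q)).trans
                  ((((h8.cons q).cons i).cons j).cons q)
              have e2 : Eqv m (q :: j :: i :: q :: j :: W5)
                  (q :: i :: j :: q :: j :: W5) :=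
                (e_swap hij.symm (q :: j :: W5)).cons q
              have e3 : Eqv m (q :: i :: j :: q :: j :: W5)
                  (q :: i :: q :: j :: q :: W5) :=
                ((e_braid hqj.symm W5).cons i).cons q
              have e4 : Eqv m (q :: i :: q :: j :: q :: W5)
                  (i :: q :: i :: j :: q :: W5) := e_braid hiq.symm (j :: q :: W5)
              have e5 : Eqv m (i :: q :: i :: j :: q :: W5)
                  (i :: q :: j :: i :: q :: W5) :=
                ((e_swap hij (q :: W5)).cons q).cons i
              exact ((e1.trans e2).trans e3).trans (e4.trans e5)
          · -- Adj i j : impossible since Adj i q and Adj q j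
            exact (adj_adj_adj_absurd hiq hqj hij).elim

lemma eqv_cancel_head {i : Fin m} {U V : List (Fin m)} (h : Eqv m (i :: U) (i :: V)) :
    Eqv m U V := by
  obtain ⟨k, hk⟩ := eqv_iff_eqN.1 h
  exact (key m U.length k le_rfl hk).1 rfl

lemma Step.rev {u v : List (Fin m)} (h : Step m u v) :
    Step m u.reverse v.reverse := by
  cases h with
  | comm a b i j h => simpa using Step.comm b.reverse a.reverse j i h.symm
  | braid a b i j h => simpa using Step.braid b.reverse a.reverse i j h

lemma Eqv.rev {u v : List (Fin m)} (h : Eqv m u v) : Eqv m u.reverse v.reverse := by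
  induction h with
  | refl => exact Eqv.rfl
  | tail _ hstep ih => exact ih.trans (Eqv.single hstep.rev)

end Words

namespace Bridge
open Words

variable {n : ℕ}

/-- The canonical projection from words to the braid monoid. -/
def π {n : ℕ} (l : List (Fin (n - 1))) : BraidMonoid n :=
  (conGen (BraidRel n)).mk' (FreeMonoid.ofList l)

lemma π_append (a b : List (Fin (n - 1))) :
    (π (a ++ b) : BraidMonoid n) = π a * π b := by
  show (conGen (BraidRel n)).mk' (FreeMonoid.ofList a * FreeMonoid.ofList b) = _
  rw [map_mul]; rfl

lemma π_nil : (π [] : BraidMonoid n) = 1 := map_one _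

lemma π_cons (i : Fin (n - 1)) (l : List (Fin (n - 1))) :
    (π (i :: l) : BraidMonoid n) = gen i * π l := by
  show (conGen (BraidRel n)).mk' (FreeMonoid.of i * FreeMonoid.ofList l) = _
  rw [map_mul]; rfl

lemma π_single (i : Fin (n - 1)) : (π [i] : BraidMonoid n) = gen i := rfl

lemma gen_comm {i j : Fin (n - 1)} (h : Far i j) :
    (gen i : BraidMonoid n) * gen j = gen j * gen i := by
  have hc : (conGen (BraidRel n)) (FreeMonoid.of i * FreeMonoid.of j)
      (FreeMonoid.of j * FreeMonoid.of i) := by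
    rcases h with h | h
    · exact ConGen.Rel.of _ _ (BraidRel.comm i j h)
    · exact ConGen.Rel.symm (ConGen.Rel.of _ _ (BraidRel.comm j i h))
  calc (gen i : BraidMonoid n) * gen j
      = (id ((conGen (BraidRel n)).mk' (FreeMonoid.of i * FreeMonoid.of j)) : BraidMonoid n) :=
        (map_mul _ _ _).symm
    _ = (id ((conGen (BraidRel n)).mk' (FreeMonoid.of j * FreeMonoid.of i)) : BraidMonoid n) :=
        by exact ((conGen (BraidRel n)).eq).2 hc
    _ = gen j * gen i := map_mul _ _ _

lemma gen_braid {i j : Fin (n - 1)} (h : Adj i j) :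
    (gen i : BraidMonoid n) * gen j * gen i = gen j * gen i * gen j := by
  have hc : (conGen (BraidRel n)) (FreeMonoid.of i * FreeMonoid.of j * FreeMonoid.of i)
      (FreeMonoid.of j * FreeMonoid.of i * FreeMonoid.of j) := by
    rcases h with h | h
    · exact ConGen.Rel.of _ _ (BraidRel.braid i j h)
    · exact ConGen.Rel.symm (ConGen.Rel.of _ _ (BraidRel.braid j i h))
  calc (gen i : BraidMonoid n) * gen j * gen i
      = (id ((conGen (BraidRel n)).mk' (FreeMonoid.of i * FreeMonoid.of j * FreeMonoid.of i)) : BraidMonoid n) := by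
        rw [map_mul, map_mul]; rfl
    _ = (id ((conGen (BraidRel n)).mk' (FreeMonoid.of j * FreeMonoid.of i * FreeMonoid.of j)) : BraidMonoid n) :=
        by exact ((conGen (BraidRel n)).eq).2 hc
    _ = gen j * gen i * gen j := by rw [map_mul, map_mul]; rfl

lemma step_π {u v : List (Fin (n - 1))} (h : Step (n - 1) u v) :
    (π u : BraidMonoid n) = π v := by
  cases h with
  | comm a b i j h =>
    have h2 : (gen i : BraidMonoid n) * gen j = gen j * gen i := gen_comm h
    calc (π (a ++ i :: j :: b) : BraidMonoid n)
        = π a * ((gen i * gen j) * π b) := by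
          simp [π_append, π_cons, mul_assoc]
      _ = π a * ((gen j * gen i) * π b) := by rw [h2]
      _ = π (a ++ j :: i :: b) := by simp [π_append, π_cons, mul_assoc]
  | braid a b i j h =>
    have h2 : (gen i : BraidMonoid n) * gen j * gen i = gen j * gen i * gen j :=
      gen_braid h
    calc (π (a ++ i :: j :: i :: b) : BraidMonoid n)
        = π a * ((gen i * gen j * gen i) * π b) := by
          simp [π_append, π_cons, mul_assoc]
      _ = π a * ((gen j * gen i * gen j) * π b) := by rw [h2]
      _ = π (a ++ j :: i :: j :: b) := by simp [π_append, π_cons, mul_assoc]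

lemma eqv_π {u v : List (Fin (n - 1))} (h : Eqv (n - 1) u v) :
    (π u : BraidMonoid n) = π v := by
  induction h with
  | refl => rfl
  | tail _ hstep ih => exact ih.trans (step_π hstep)

/-- The congruence of word equivalence. -/
def Econ (n : ℕ) : Con (FreeMonoid (Fin (n - 1))) where
  r := fun u v => Eqv (n - 1) u.toList v.toList
  iseqv := ⟨fun _ => Eqv.rfl, Eqv.symm, Eqv.trans⟩
  mul' := fun {w x y z} h h' => by
    show Eqv (n - 1) (w.toList ++ y.toList) (x.toList ++ z.toList)
    exact (h.append_right _).trans (h'.append_left _)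

lemma braidRel_eqv {x y : FreeMonoid (Fin (n - 1))} (h : BraidRel n x y) :
    Eqv (n - 1) x.toList y.toList := by
  cases h with
  | comm i j h => exact Eqv.single (Step.comm [] [] i j (Or.inl h))
  | braid i j h => exact Eqv.single (Step.braid [] [] i j (Or.inl h))

lemma π_eq_iff {u v : List (Fin (n - 1))} :
    (π u : BraidMonoid n) = π v ↔ Eqv (n - 1) u v := by
  constructor
  · intro h
    have h1 : conGen (BraidRel n) (FreeMonoid.ofList u) (FreeMonoid.ofList v) :=
      ((conGen (BraidRel n)).eq).1 h
    have h2 : (Econ n) (FreeMonoid.ofList u) (FreeMonoid.ofList v) :=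
      Con.conGen_le.2 (fun _ _ hr => braidRel_eqv hr) h1
    exact h2
  · exact eqv_π

lemma exists_rep (x : BraidMonoid n) : ∃ l : List (Fin (n - 1)), x = π l := by
  obtain ⟨w, hw⟩ := Con.mk'_surjective (c := conGen (BraidRel n)) x
  exact ⟨w.toList, hw.symm⟩

lemma lift_ofList_len (l : List (Fin (n - 1))) :
    (FreeMonoid.lift fun _ : Fin (n - 1) => Multiplicative.ofAdd 1)
      (FreeMonoid.ofList l) = Multiplicative.ofAdd l.length := by
  induction l with
  | nil => exact map_one _
  | cons a l ih =>
    show (FreeMonoid.lift fun _ : Fin (n - 1) => Multiplicative.ofAdd 1)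
        (FreeMonoid.of a * FreeMonoid.ofList l) = _
    rw [map_mul, ih, FreeMonoid.lift_eval_of, ← ofAdd_add]
    simp [Nat.add_comm]

/-- Length homomorphism on the braid monoid. -/
def lenHom (n : ℕ) : BraidMonoid n →* Multiplicative ℕ :=
  Con.lift _ (FreeMonoid.lift fun _ : Fin (n - 1) => Multiplicative.ofAdd 1)
    (Con.conGen_le.2 (by
      intro x y hr
      rw [Con.ker_rel]
      cases hr with
      | comm i j h => simp [map_mul]
      | braid i j h => simp [map_mul]))

def blen (x : BraidMonoid n) : ℕ := Multiplicative.toAdd (lenHom n x)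

lemma blen_π (l : List (Fin (n - 1))) : blen (π l : BraidMonoid n) = l.length := by
  show Multiplicative.toAdd (Con.lift _ _ _ ((conGen (BraidRel n)).mk' (FreeMonoid.ofList l)))
      = l.length
  rw [Con.lift_mk', lift_ofList_len]
  rfl

lemma blen_mul (x y : BraidMonoid n) : blen (x * y) = blen x + blen y := by
  show Multiplicative.toAdd (lenHom n (x * y)) = _
  rw [map_mul, toAdd_mul]; rfl

lemma blen_one : blen (1 : BraidMonoid n) = 0 := by
  have := blen_π (n := n) []
  simpa [π_nil] using this

lemma blen_gen (i : Fin (n - 1)) : blen (gen i : BraidMonoid n) = 1 := by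
  have := blen_π (n := n) [i]
  simpa [π_single] using this

lemma eq_one_of_blen_eq_zero {x : BraidMonoid n} (h : blen x = 0) : x = 1 := by
  obtain ⟨l, rfl⟩ := exists_rep x
  rw [blen_π] at h
  rw [List.eq_nil_of_length_eq_zero h, π_nil]

lemma gen_left_cancel {i : Fin (n - 1)} {x y : BraidMonoid n}
    (h : (gen i : BraidMonoid n) * x = gen i * y) : x = y := by
  obtain ⟨u, rfl⟩ := exists_rep x
  obtain ⟨v, rfl⟩ := exists_rep y
  rw [← π_cons, ← π_cons] at h
  exact eqv_π (eqv_cancel_head (π_eq_iff.1 h))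

lemma gen_right_cancel {i : Fin (n - 1)} {x y : BraidMonoid n}
    (h : x * (gen i : BraidMonoid n) = y * gen i) : x = y := by
  obtain ⟨u, rfl⟩ := exists_rep x
  obtain ⟨v, rfl⟩ := exists_rep y
  rw [← π_single, ← π_append, ← π_append] at h
  have h1 : Eqv (n - 1) (u ++ [i]) (v ++ [i]) := π_eq_iff.1 h
  have h2 : Eqv (n - 1) (i :: u.reverse) (i :: v.reverse) := by
    simpa using h1.rev
  have h3 := (eqv_cancel_head h2).rev
  simp only [List.reverse_reverse] at h3
  exact eqv_π h3

lemma mul_left_cancel' (a x y : BraidMonoid n) (h : a * x = a * y) : x = y := by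
  obtain ⟨l, rfl⟩ := exists_rep a
  induction l generalizing x y with
  | nil => simpa [π_nil] using h
  | cons c l ih =>
    rw [π_cons, mul_assoc, mul_assoc] at h
    exact ih _ _ (gen_left_cancel h)

lemma mul_right_cancel' (a x y : BraidMonoid n) (h : x * a = y * a) : x = y := by
  obtain ⟨l, rfl⟩ := exists_rep a
  induction l generalizing x y with
  | nil => simpa [π_nil] using h
  | cons c l ih =>
    rw [π_cons, ← mul_assoc, ← mul_assoc] at h
    exact gen_right_cancel (ih _ _ h)

lemma not_gen_rdvd_one (i : Fin (n - 1)) : ¬ rdvd (gen i) (1 : BraidMonoid n) := by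
  rintro ⟨z, hz⟩
  have := congrArg blen hz
  rw [blen_one, blen_mul, blen_gen] at this
  omega

lemma not_gen_ldvd_one (i : Fin (n - 1)) : ¬ ldvd (gen i) (1 : BraidMonoid n) := by
  rintro ⟨z, hz⟩
  have := congrArg blen hz
  rw [blen_one, blen_mul, blen_gen] at this
  omega

lemma exists_gen_rdvd {z : BraidMonoid n} (hz : z ≠ 1) :
    ∃ i : Fin (n - 1), rdvd (gen i) z := by
  obtain ⟨l, rfl⟩ := exists_rep z
  cases hl : l.reverse with
  | nil =>
    exact absurd (by rw [← List.reverse_reverse l, hl]; exact π_nil) hz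
  | cons c t =>
    refine ⟨c, π t.reverse, ?_⟩
    rw [← π_single, ← π_append]
    congr 1
    rw [← List.reverse_reverse l, hl]
    simp
lemma exists_gen_ldvd {z : BraidMonoid n} (hz : z ≠ 1) :
    ∃ i : Fin (n - 1), ldvd (gen i) z := by
  obtain ⟨l, rfl⟩ := exists_rep z
  cases l with
  | nil => exact absurd π_nil hz
  | cons c t => exact ⟨c, π t, by rw [← π_single, ← π_append]; rfl⟩

lemma eq_one_of_ldvd_one {x : BraidMonoid n} (h : ldvd x (1 : BraidMonoid n)) : x = 1 := by
  obtain ⟨z, hz⟩ := h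
  have := congrArg blen hz
  rw [blen_one, blen_mul] at this
  exact eq_one_of_blen_eq_zero (by omega)

end Bridge

section Helpers

open Bridge

variable {n : ℕ}

/-- A chosen complement witnessing right divisibility. -/
noncomputable def pickR (d z : BraidMonoid n) : BraidMonoid n :=
  if h : rdvd d z then h.choose else 1

lemma pickR_spec {d z : BraidMonoid n} (h : rdvd d z) : z = pickR d z * d := by
  rw [pickR, dif_pos h]; exact h.choose_spec

/-- A chosen complement witnessing left divisibility. -/
noncomputable def pickL (d z : BraidMonoid n) : BraidMonoid n :=
  if h : ldvd d z then h.choose else 1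

lemma pickL_spec {d z : BraidMonoid n} (h : ldvd d z) : z = d * pickL d z := by
  rw [pickL, dif_pos h]; exact h.choose_spec

/-- The set of generators right-dividing `z`. -/
noncomputable def Rr (z : BraidMonoid n) : Finset (Fin (n - 1)) :=
  Finset.univ.filter (fun i => rdvd (gen i) z)

/-- The set of generators left-dividing `z`. -/
noncomputable def Ll (z : BraidMonoid n) : Finset (Fin (n - 1)) :=
  Finset.univ.filter (fun i => ldvd (gen i) z)

lemma mem_Rr {z : BraidMonoid n} {i : Fin (n - 1)} : i ∈ Rr z ↔ rdvd (gen i) z := by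
  simp [Rr]

lemma mem_Ll {z : BraidMonoid n} {i : Fin (n - 1)} : i ∈ Ll z ↔ ldvd (gen i) z := by
  simp [Ll]

lemma Rr_eq_empty_iff {z : BraidMonoid n} : Rr z = ∅ ↔ z = 1 := by
  constructor
  · intro h
    by_contra hz
    obtain ⟨i, hi⟩ := exists_gen_rdvd hz
    have : i ∈ Rr z := mem_Rr.2 hi
    simp [h] at this
  · rintro rfl
    exact Finset.eq_empty_iff_forall_notMem.2 fun i hi =>
      not_gen_rdvd_one i (mem_Rr.1 hi)

lemma Ll_eq_empty_iff {z : BraidMonoid n} : Ll z = ∅ ↔ z = 1 := by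
  constructor
  · intro h
    by_contra hz
    obtain ⟨i, hi⟩ := exists_gen_ldvd hz
    have : i ∈ Ll z := mem_Ll.2 hi
    simp [h] at this
  · rintro rfl
    exact Finset.eq_empty_iff_forall_notMem.2 fun i hi =>
      not_gen_ldvd_one i (mem_Ll.1 hi)

end Helpers

/-- Graded Möbius inversion on `Br_n`: `h` is the graded Möbius
transform of `f` iff `f(x) = Σ_{y, τ(x·y) = τ(x)} h(x·y)` for every `x`. -/
theorem graded_mobius_inversion (n : ℕ) (hn : 2 ≤ n)
    (Δhat : Finset (Fin (n - 1)) → BraidMonoid n)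
    (hlub_l : ∀ X : Finset (Fin (n - 1)),
      (∀ i ∈ X, ldvd (gen i) (Δhat X)) ∧
        ∀ z : BraidMonoid n, (∀ i ∈ X, ldvd (gen i) z) → ldvd (Δhat X) z)
    (hlub_r : ∀ X : Finset (Fin (n - 1)),
      (∀ i ∈ X, rdvd (gen i) (Δhat X)) ∧
        ∀ z : BraidMonoid n, (∀ i ∈ X, rdvd (gen i) z) → rdvd (Δhat X) z)
    (τ : BraidMonoid n → ℕ)
    (hτ_pos : ∀ x : BraidMonoid n, 1 ≤ τ x)
    (hτ_le : ∀ x : BraidMonoid n, ldvd x (garside n ^ τ x))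
    (hτ_min : ∀ (x : BraidMonoid n) (k : ℕ), 1 ≤ k → ldvd x (garside n ^ k) → τ x ≤ k)
    (f h : BraidMonoid n → ℝ)
    (hfin : ∀ x : BraidMonoid n, {y : BraidMonoid n | τ (x * y) = τ x}.Finite) :
    (∀ x : BraidMonoid n, h x = ∑ X : Finset (Fin (n - 1)),
        if τ (x * Δhat X) = τ x then (-1 : ℝ) ^ X.card * f (x * Δhat X) else 0) ↔
      (∀ x : BraidMonoid n, f x = ∑ y ∈ (hfin x).toFinset, h (x * y)) := by
  have hmono : ∀ x y : BraidMonoid n, τ x ≤ τ (x * y) := by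
    intro x y
    obtain ⟨z, hz⟩ := hτ_le (x * y)
    exact hτ_min x (τ (x * y)) (hτ_pos (x * y)) ⟨y * z, by rw [← mul_assoc, ← hz]⟩
  have hmemD : ∀ (x y : BraidMonoid n), y ∈ (hfin x).toFinset ↔ τ (x * y) = τ x := by
    intro x y; rw [Set.Finite.mem_toFinset]; exact Iff.rfl
  have hone_mem : ∀ x : BraidMonoid n, (1 : BraidMonoid n) ∈ (hfin x).toFinset := by
    intro x; rw [hmemD, mul_one]
  have hpow : ∀ S : Finset (Fin (n - 1)),
      (∑ X ∈ S.powerset, (-1 : ℝ) ^ X.card) = if S = ∅ then 1 else 0 := by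
    intro S
    have h1 : ((∑ X ∈ S.powerset, (-1 : ℤ) ^ X.card : ℤ) : ℝ)
        = ∑ X ∈ S.powerset, (-1 : ℝ) ^ X.card := by push_cast; rfl
    rw [← h1, Finset.sum_powerset_neg_one_pow_card]
    split <;> simp
  constructor
  · -- Möbius transform ⇒ summation formula
    intro H x
    have step1 : ∑ y ∈ (hfin x).toFinset, h (x * y)
        = ∑ p ∈ ((hfin x).toFinset ×ˢ (Finset.univ : Finset (Finset (Fin (n - 1))))).filter
            (fun p => τ (x * p.1 * Δhat p.2) = τ (x * p.1)),
            (-1 : ℝ) ^ p.2.card * f (x * p.1 * Δhat p.2) := by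
      rw [Finset.sum_filter, Finset.sum_product]
      exact Finset.sum_congr rfl fun y _ => H (x * y)
    have step2 : ∑ p ∈ ((hfin x).toFinset ×ˢ (Finset.univ : Finset (Finset (Fin (n - 1))))).filter
            (fun p => τ (x * p.1 * Δhat p.2) = τ (x * p.1)),
            (-1 : ℝ) ^ p.2.card * f (x * p.1 * Δhat p.2)
        = ∑ q ∈ ((hfin x).toFinset ×ˢ (Finset.univ : Finset (Finset (Fin (n - 1))))).filter
            (fun q => q.2 ⊆ Rr q.1),
            (-1 : ℝ) ^ q.2.card * f (x * q.1) := by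
      refine Finset.sum_bij' (fun p _ => (p.1 * Δhat p.2, p.2))
        (fun q _ => (pickR (Δhat q.2) q.1, q.2)) ?_ ?_ ?_ ?_ ?_
      · rintro ⟨y, X⟩ hp
        try dsimp only
        rw [Finset.mem_filter, Finset.mem_product, hmemD] at hp ⊢
        obtain ⟨⟨hy, -⟩, hcond⟩ := hp
        refine ⟨⟨?_, Finset.mem_univ _⟩, ?_⟩
        · show τ (x * (y * Δhat X)) = τ x
          rw [← mul_assoc, hcond, hy]
        · intro i hi
          rw [mem_Rr]
          obtain ⟨c, hc⟩ := (hlub_r X).1 i hi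
          exact ⟨y * c, by rw [hc, mul_assoc]⟩
      · rintro ⟨z, X⟩ hq
        try dsimp only
        rw [Finset.mem_filter, Finset.mem_product, hmemD] at hq ⊢
        obtain ⟨⟨hz, -⟩, hsub⟩ := hq
        have hd : rdvd (Δhat X) z := (hlub_r X).2 z fun i hi => mem_Rr.1 (hsub hi)
        have hzz : z = pickR (Δhat X) z * Δhat X := pickR_spec hd
        have h1 : τ (x * pickR (Δhat X) z * Δhat X) = τ x := by
          rw [mul_assoc, ← hzz, hz]
        have h2 : τ (x * pickR (Δhat X) z) = τ x := by
          refine le_antisymm ?_ (hmono x _)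
          have hxz : x * z = x * pickR (Δhat X) z * Δhat X := by
            rw [mul_assoc, ← hzz]
          rw [← hz, hxz]
          exact hmono _ _
        exact ⟨⟨h2, Finset.mem_univ _⟩, by rw [h1, h2]⟩
      · rintro ⟨y, X⟩ hp
        try dsimp only
        have : pickR (Δhat X) (y * Δhat X) = y :=
          Bridge.mul_right_cancel' (Δhat X) _ _ (pickR_spec ⟨y, rfl⟩).symm
        simp only [this]
      · rintro ⟨z, X⟩ hq
        try dsimp only
        rw [Finset.mem_filter] at hq
        have hd : rdvd (Δhat X) z :=
          (hlub_r X).2 z fun i hi => mem_Rr.1 (hq.2 hi)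
        simp only [← pickR_spec hd]
      · rintro ⟨y, X⟩ hp
        try dsimp only
        rw [mul_assoc]
    have step3 : ∑ q ∈ ((hfin x).toFinset ×ˢ (Finset.univ : Finset (Finset (Fin (n - 1))))).filter
            (fun q => q.2 ⊆ Rr q.1),
            (-1 : ℝ) ^ q.2.card * f (x * q.1)
        = ∑ z ∈ (hfin x).toFinset, (if Rr z = ∅ then (1 : ℝ) else 0) * f (x * z) := by
      rw [Finset.sum_filter, Finset.sum_product]
      refine Finset.sum_congr rfl fun z _ => ?_
      try dsimp only
      rw [← Finset.sum_filter]
      have huniv : (Finset.univ : Finset (Finset (Fin (n - 1)))).filter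
          (fun X => X ⊆ Rr z) = (Rr z).powerset := by
        ext X; simp [Finset.mem_powerset]
      rw [huniv, ← Finset.sum_mul, hpow]
    have step4 : ∑ z ∈ (hfin x).toFinset, (if Rr z = ∅ then (1 : ℝ) else 0) * f (x * z)
        = f x := by
      rw [Finset.sum_eq_single_of_mem 1 (hone_mem x)
        (fun z _ hz => by rw [if_neg fun hRe => hz (Rr_eq_empty_iff.1 hRe), zero_mul])]
      rw [if_pos (Rr_eq_empty_iff.2 rfl), one_mul, mul_one]
    exact (step1.trans (step2.trans (step3.trans step4))).symm
  · -- summation formula ⇒ Möbius transform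
    intro G x
    have step1 : (∑ X : Finset (Fin (n - 1)),
          if τ (x * Δhat X) = τ x then (-1 : ℝ) ^ X.card * f (x * Δhat X) else 0)
        = ∑ X : Finset (Fin (n - 1)), ∑ y ∈ (hfin (x * Δhat X)).toFinset,
            (if τ (x * Δhat X) = τ x then (-1 : ℝ) ^ X.card * h (x * Δhat X * y) else 0) := by
      refine Finset.sum_congr rfl fun X _ => ?_
      by_cases hc : τ (x * Δhat X) = τ x
      · rw [if_pos hc, G (x * Δhat X), Finset.mul_sum]
        exact Finset.sum_congr rfl fun y _ => by rw [if_pos hc]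
      · rw [if_neg hc]
        exact (Finset.sum_eq_zero fun y _ => by rw [if_neg hc]).symm
    have step2 : (∑ X : Finset (Fin (n - 1)), ∑ y ∈ (hfin (x * Δhat X)).toFinset,
            (if τ (x * Δhat X) = τ x then (-1 : ℝ) ^ X.card * h (x * Δhat X * y) else 0))
        = ∑ p ∈ ((Finset.univ : Finset (Finset (Fin (n - 1)))).sigma
              (fun X => (hfin (x * Δhat X)).toFinset)).filter
            (fun p => τ (x * Δhat p.1) = τ x),
            (-1 : ℝ) ^ p.1.card * h (x * Δhat p.1 * p.2) := by
      rw [Finset.sum_filter, Finset.sum_sigma]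
    have step3 : ∑ p ∈ ((Finset.univ : Finset (Finset (Fin (n - 1)))).sigma
              (fun X => (hfin (x * Δhat X)).toFinset)).filter
            (fun p => τ (x * Δhat p.1) = τ x),
            (-1 : ℝ) ^ p.1.card * h (x * Δhat p.1 * p.2)
        = ∑ q ∈ ((hfin x).toFinset ×ˢ (Finset.univ : Finset (Finset (Fin (n - 1))))).filter
            (fun q => q.2 ⊆ Ll q.1),
            (-1 : ℝ) ^ q.2.card * h (x * q.1) := by
      refine Finset.sum_bij' (fun p _ => (Δhat p.1 * p.2, p.1))
        (fun q _ => ⟨q.2, pickL (Δhat q.2) q.1⟩) ?_ ?_ ?_ ?_ ?_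
      · rintro ⟨X, y⟩ hp
        try dsimp only
        rw [Finset.mem_filter, Finset.mem_sigma] at hp
        obtain ⟨⟨-, hy⟩, hcond⟩ := hp
        rw [hmemD] at hy
        rw [Finset.mem_filter, Finset.mem_product, hmemD]
        refine ⟨⟨?_, Finset.mem_univ _⟩, ?_⟩
        · show τ (x * (Δhat X * y)) = τ x
          rw [← mul_assoc, hy, hcond]
        · intro i hi
          rw [mem_Ll]
          obtain ⟨c, hc⟩ := (hlub_l X).1 i hi
          exact ⟨c * y, by rw [hc, mul_assoc]⟩
      · rintro ⟨z, X⟩ hq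
        try dsimp only
        rw [Finset.mem_filter, Finset.mem_product, hmemD] at hq
        obtain ⟨⟨hz, -⟩, hsub⟩ := hq
        have hd : ldvd (Δhat X) z := (hlub_l X).2 z fun i hi => mem_Ll.1 (hsub hi)
        have hzz : z = Δhat X * pickL (Δhat X) z := pickL_spec hd
        have h1 : τ (x * Δhat X * pickL (Δhat X) z) = τ x := by
          rw [mul_assoc, ← hzz, hz]
        have h2 : τ (x * Δhat X) = τ x := by
          refine le_antisymm ?_ (hmono x _)
          have hxz : x * z = x * Δhat X * pickL (Δhat X) z := by
            rw [mul_assoc, ← hzz]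
          rw [← hz, hxz]
          exact hmono _ _
        rw [Finset.mem_filter, Finset.mem_sigma]
        refine ⟨⟨Finset.mem_univ _, ?_⟩, h2⟩
        rw [hmemD, h1, h2]
      · rintro ⟨X, y⟩ hp
        try dsimp only
        have : pickL (Δhat X) (Δhat X * y) = y :=
          Bridge.mul_left_cancel' (Δhat X) _ _ (pickL_spec ⟨y, rfl⟩).symm
        simp only [this]
      · rintro ⟨z, X⟩ hq
        try dsimp only
        rw [Finset.mem_filter] at hq
        have hd : ldvd (Δhat X) z :=
          (hlub_l X).2 z fun i hi => mem_Ll.1 (hq.2 hi)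
        simp only [← pickL_spec hd]
      · rintro ⟨X, y⟩ hp
        try dsimp only
        rw [mul_assoc]
    have step4 : ∑ q ∈ ((hfin x).toFinset ×ˢ (Finset.univ : Finset (Finset (Fin (n - 1))))).filter
            (fun q => q.2 ⊆ Ll q.1),
            (-1 : ℝ) ^ q.2.card * h (x * q.1)
        = h x := by
      rw [Finset.sum_filter, Finset.sum_product]
      have step4a : ∀ z ∈ (hfin x).toFinset,
          (∑ X ∈ (Finset.univ : Finset (Finset (Fin (n - 1)))),
            if X ⊆ Ll z then (-1 : ℝ) ^ X.card * h (x * z) else 0)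
          = (if Ll z = ∅ then (1 : ℝ) else 0) * h (x * z) := by
        intro z _
        try dsimp only
        rw [← Finset.sum_filter]
        have huniv : (Finset.univ : Finset (Finset (Fin (n - 1)))).filter
            (fun X => X ⊆ Ll z) = (Ll z).powerset := by
          ext X; simp [Finset.mem_powerset]
        rw [huniv, ← Finset.sum_mul, hpow]
      rw [Finset.sum_congr rfl step4a]
      rw [Finset.sum_eq_single_of_mem 1 (hone_mem x)
        (fun z _ hz => by rw [if_neg fun hLe => hz (Ll_eq_empty_iff.1 hLe), zero_mul])]
      rw [if_pos (Ll_eq_empty_iff.2 rfl), one_mul, mul_one]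
    exact (step1.trans (step2.trans (step3.trans step4))).symm


end BraidMeasure
end
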